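/- arXiv:0712.0192 — 7 statements merged into one kernel-verified Lean document; each statement's English description precedes it below -/
import Mathlib

section
/- Let G be an infinite, locally finite graph with minimal degree at least 2 and bounded degrees, and suppose G contains an infinite non-backtracking ray of directed edges e_0, e_1, e_2, .... Then 1 lies in the spectrum of B: the functions f_k = sum_{i=1}^{k} delta_{e_i} - sum_{i=0}^{k-1} delta_{e_i^{-1}} satisfy ||(B - I) f_k|| = 2 while ||f_k|| = sqrt(2k), so f_k / ||f_k|| form approximate eigenfunctions for eigenvalue 1. -/
open scoped ENNReal NNReal

lemma aux_norm_sum_single {E : Type} [DecidableEq E] (S : Finset E) (c : E → ℂ)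
    (hc : ∀ e ∈ S, ‖c e‖ = 1) :
    ‖∑ e ∈ S, lp.single 2 e (c e)‖ = Real.sqrt S.card := by
  have hp : 0 < (2 : ℝ≥0∞).toReal := by norm_num
  have h := lp.norm_sum_single (E := fun _ : E => ℂ) hp c S
  have h2 : (2 : ℝ≥0∞).toReal = ((2 : ℕ) : ℝ) := by norm_num
  rw [h2] at h
  simp only [Real.rpow_natCast] at h
  have h3 : ∑ e ∈ S, ‖c e‖ ^ (2 : ℕ) = (S.card : ℝ) := by
    rw [Finset.sum_congr rfl fun e he => by rw [hc e he, one_pow]]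
    simp
  rw [h3] at h
  rw [← h, Real.sqrt_sq (norm_nonneg _)]

lemma aux_sum_Icc_one {M : Type*} [AddCommMonoid M] (g : ℕ → M) (k : ℕ) :
    ∑ i ∈ Finset.Icc 1 k, g i = ∑ i ∈ Finset.range k, g (i + 1) := by
  induction k with
  | zero => simp
  | succ n ih =>
    rw [Finset.sum_Icc_succ_top (Nat.succ_le_succ (Nat.zero_le n)), ih, Finset.sum_range_succ]

lemma aux_telescope {M : Type*} [AddCommGroup M] (g : ℕ → M) (k : ℕ) :
    (∑ i ∈ Finset.range k, g i) - ∑ i ∈ Finset.Icc 1 k, g i = g 0 - g k := by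
  rw [aux_sum_Icc_one]
  have h2 : (∑ i ∈ Finset.range k, g i) + g k
      = (∑ i ∈ Finset.range k, g (i + 1)) + g 0 := by
    rw [← Finset.sum_range_succ, Finset.sum_range_succ']
  calc (∑ i ∈ Finset.range k, g i) - ∑ i ∈ Finset.range k, g (i + 1)
      = ((∑ i ∈ Finset.range k, g i) + g k) - ((∑ i ∈ Finset.range k, g (i + 1)) + g k) := by
        abel
    _ = ((∑ i ∈ Finset.range k, g (i + 1)) + g 0) - ((∑ i ∈ Finset.range k, g (i + 1)) + g k) := by
        rw [h2]
    _ = g 0 - g k := by abel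

set_option maxHeartbeats 2000000 in
/-- For an infinite, locally finite graph with minimal degree at least 2,
bounded degrees, containing an infinite non-backtracking ray `e₀, e₁, …`, the number `1`
lies in the spectrum of the non-backtracking operator `B`: the functions
`f k = ∑_{i=1}^{k} δ_{e i} - ∑_{i=0}^{k-1} δ_{(e i)⁻¹}` satisfy `‖(B - I) (f k)‖ = 2`
while `‖f k‖ = √(2k)`, so they are approximate eigenfunctions for eigenvalue `1`. -/
theorem one_mem_spectrum_nonbacktracking
    {V E : Type} (tail head : E → V) (inv : E → E)
    (hinv_inv : ∀ e, inv (inv e) = e)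
    (hinv_ne : ∀ e, inv e ≠ e)
    (htail_inv : ∀ e, tail (inv e) = head e)
    (follows : E → E → Prop)
    (hfollows : ∀ e e', follows e e' ↔ head e = tail e' ∧ e' ≠ inv e)
    (hinfinite : Infinite V) [DecidableEq E]
    (dmax : ℕ)
    (hdeg : ∀ v : V, 2 ≤ Nat.card {e : E // tail e = v} ∧
      Nat.card {e : E // tail e = v} ≤ dmax)
    (B : lp (fun _ : E => ℂ) 2 →L[ℂ] lp (fun _ : E => ℂ) 2)
    (hB : ∀ f e, B f e = ∑' e' : {e' : E // follows e e'}, f e')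
    -- an infinite non-backtracking ray (a simple ray: the tails are pairwise distinct)
    (ray : ℕ → E)
    (hray : ∀ i, follows (ray i) (ray (i + 1)))
    (hray_inj : Function.Injective fun i => tail (ray i)) :
    (∀ k : ℕ, 1 ≤ k →
      ‖(B - 1) ((∑ i ∈ Finset.Icc 1 k, lp.single 2 (ray i) (1 : ℂ)) -
          ∑ i ∈ Finset.range k, lp.single 2 (inv (ray i)) (1 : ℂ))‖ = 2 ∧
      ‖((∑ i ∈ Finset.Icc 1 k, lp.single 2 (ray i) (1 : ℂ)) -
          ∑ i ∈ Finset.range k, lp.single 2 (inv (ray i)) (1 : ℂ) :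
          lp (fun _ : E => ℂ) 2)‖ =
        Real.sqrt (2 * k)) ∧
    (1 : ℂ) ∈ spectrum ℂ B := by
  classical
  -- basic facts
  have hhead_inv : ∀ e, head (inv e) = tail e := fun e => by
    have h := htail_inv (inv e)
    rw [hinv_inv] at h
    exact h.symm
  have hhead_ray : ∀ i, head (ray i) = tail (ray (i + 1)) := fun i =>
    ((hfollows _ _).mp (hray i)).1
  have hray_injE : Function.Injective ray := fun i j h => hray_inj (congrArg tail h)
  have hinv_inj : Function.Injective inv := Function.LeftInverse.injective hinv_inv
  have hray_ne_inv : ∀ i j, ray i ≠ inv (ray j) := by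
    intro i j h
    have h1 : tail (ray i) = tail (ray (j + 1)) := by
      rw [h, htail_inv, hhead_ray]
    have h2 : i = j + 1 := hray_inj h1
    subst h2
    exact ((hfollows _ _).mp (hray j)).2 h
  -- coordinates of single
  have hsingle : ∀ a j : E, (lp.single 2 a (1 : ℂ) : lp (fun _ : E => ℂ) 2) j
      = if j = a then 1 else 0 := by
    intro a j
    by_cases h : j = a
    · subst h; rw [lp.single_apply_self, if_pos rfl]
    · rw [lp.single_apply_ne 2 a _ h, if_neg h]
  -- summability of restricted singles
  have hsumm : ∀ e a : E,
      Summable (fun e' : {e' : E // follows e e'} =>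
        (lp.single 2 a (1 : ℂ) : lp (fun _ : E => ℂ) 2) (e' : E)) := by
    intro e a
    by_cases h : follows e a
    · refine summable_of_ne_finset_zero
        (s := {(⟨a, h⟩ : {e' : E // follows e e'})}) ?_
      intro b hb
      refine lp.single_apply_ne 2 a _ ?_
      simp only [Finset.mem_singleton] at hb
      exact fun hba => hb (Subtype.ext hba)
    · refine summable_of_ne_finset_zero (s := (∅ : Finset _)) ?_
      intro b _
      refine lp.single_apply_ne 2 a _ ?_
      intro hba
      exact h (hba ▸ b.2)
  -- tsum of restricted singles
  have htsum : ∀ e a : E,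
      (∑' e' : {e' : E // follows e e'},
        (lp.single 2 a (1 : ℂ) : lp (fun _ : E => ℂ) 2) (e' : E))
      = if follows e a then 1 else 0 := by
    intro e a
    by_cases h : follows e a
    · rw [if_pos h, tsum_eq_single (⟨a, h⟩ : {e' : E // follows e e'})
        (fun b hb => lp.single_apply_ne 2 a _ (fun hba => hb (Subtype.ext hba)))]
      exact lp.single_apply_self 2 a 1
    · rw [if_neg h]
      have hz : (fun e' : {e' : E // follows e e'} =>
          (lp.single 2 a (1 : ℂ) : lp (fun _ : E => ℂ) 2) (e' : E)) = fun _ => 0 := by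
        funext b
        exact lp.single_apply_ne 2 a _ (fun hba => h (hba ▸ b.2))
      rw [hz, tsum_zero]
  -- coordinates of B applied to f k
  have hBF : ∀ (k : ℕ) (e : E),
      (B ((∑ i ∈ Finset.Icc 1 k, lp.single 2 (ray i) (1 : ℂ)) -
          ∑ i ∈ Finset.range k, lp.single 2 (inv (ray i)) (1 : ℂ))) e
      = (∑ i ∈ Finset.Icc 1 k, if follows e (ray i) then (1 : ℂ) else 0)
        - ∑ i ∈ Finset.range k, if follows e (inv (ray i)) then (1 : ℂ) else 0 := by
    intro k e
    rw [hB]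
    rw [tsum_congr (f := fun e' : {e' : E // follows e e'} => _) (g := fun e' =>
      (∑ i ∈ Finset.Icc 1 k,
        (lp.single 2 (ray i) (1 : ℂ) : lp (fun _ : E => ℂ) 2) (e' : E))
      - ∑ i ∈ Finset.range k,
        (lp.single 2 (inv (ray i)) (1 : ℂ) : lp (fun _ : E => ℂ) 2) (e' : E))
      (fun e' => by
        simp only [lp.coeFn_sub, lp.coeFn_sum, Pi.sub_apply, Finset.sum_apply])]
    rw [Summable.tsum_sub (summable_sum (fun i _ => hsumm e (ray i)))
      (summable_sum (fun i _ => hsumm e (inv (ray i)))),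
      Summable.tsum_finsetSum (fun i _ => hsumm e (ray i)), Summable.tsum_finsetSum (fun i _ => hsumm e (inv (ray i)))]
    simp only [htsum]
  -- pointwise rewrites
  have hrw1 : ∀ (e : E) (i : ℕ), (if follows e (ray i) then (1 : ℂ) else 0)
      = (if head e = tail (ray i) then (1 : ℂ) else 0)
        - (if e = inv (ray i) then (1 : ℂ) else 0) := by
    intro e i
    by_cases h : e = inv (ray i)
    · have hnf : ¬follows e (ray i) := by
        rw [hfollows]
        rintro ⟨-, h2⟩
        exact h2 (by rw [h, hinv_inv])
      rw [if_neg hnf, if_pos h, if_pos (by rw [h]; exact hhead_inv (ray i))]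
      ring
    · have hiff : follows e (ray i) ↔ head e = tail (ray i) := by
        rw [hfollows]
        refine ⟨fun x => x.1, fun hh => ⟨hh, fun hc => h ?_⟩⟩
        rw [hc, hinv_inv]
      rw [if_neg h, sub_zero]
      by_cases hh : head e = tail (ray i)
      · rw [if_pos hh, if_pos (hiff.mpr hh)]
      · rw [if_neg hh, if_neg (fun hf => hh (hiff.mp hf))]
  have hrw2 : ∀ (e : E) (i : ℕ), (if follows e (inv (ray i)) then (1 : ℂ) else 0)
      = (if head e = tail (ray (i + 1)) then (1 : ℂ) else 0)
        - (if e = ray i then (1 : ℂ) else 0) := by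
    intro e i
    have htl : tail (inv (ray i)) = tail (ray (i + 1)) := by
      rw [htail_inv, hhead_ray]
    by_cases h : e = ray i
    · have hnf : ¬follows e (inv (ray i)) := by
        rw [hfollows]
        rintro ⟨-, h2⟩
        exact h2 (by rw [h])
      rw [if_neg hnf, if_pos h, if_pos (by rw [h, hhead_ray])]
      ring
    · have hiff : follows e (inv (ray i)) ↔ head e = tail (ray (i + 1)) := by
        rw [hfollows, htl]
        refine ⟨fun x => x.1, fun hh => ⟨hh, fun hc => h ?_⟩⟩
        have := hinv_inj hc
        rw [← this]
      rw [if_neg h, sub_zero]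
      by_cases hh : head e = tail (ray (i + 1))
      · rw [if_pos hh, if_pos (hiff.mpr hh)]
      · rw [if_neg hh, if_neg (fun hf => hh (hiff.mp hf))]
  -- B (f k) as a combination of singles
  have hBFeq : ∀ k : ℕ,
      B ((∑ i ∈ Finset.Icc 1 k, lp.single 2 (ray i) (1 : ℂ)) -
          ∑ i ∈ Finset.range k, lp.single 2 (inv (ray i)) (1 : ℂ))
      = (∑ i ∈ Finset.range k, lp.single 2 (ray i) (1 : ℂ)) -
          ∑ i ∈ Finset.Icc 1 k, lp.single 2 (inv (ray i)) (1 : ℂ) := by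
    intro k
    refine lp.ext (funext fun e => ?_)
    rw [hBF k e]
    simp only [lp.coeFn_sub, lp.coeFn_sum, Pi.sub_apply, Finset.sum_apply]
    simp only [hsingle, hrw1 e, hrw2 e]
    rw [Finset.sum_sub_distrib, Finset.sum_sub_distrib,
      aux_sum_Icc_one (fun i => if head e = tail (ray i) then (1 : ℂ) else 0) k]
    ring
  -- (B - 1) (f k)
  have hdiff : ∀ k : ℕ,
      (B - 1) ((∑ i ∈ Finset.Icc 1 k, lp.single 2 (ray i) (1 : ℂ)) -
          ∑ i ∈ Finset.range k, lp.single 2 (inv (ray i)) (1 : ℂ))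
      = (lp.single 2 (ray 0) (1 : ℂ) - lp.single 2 (ray k) (1 : ℂ)) +
        (lp.single 2 (inv (ray 0)) (1 : ℂ) - lp.single 2 (inv (ray k)) (1 : ℂ)) := by
    intro k
    rw [ContinuousLinearMap.sub_apply, ContinuousLinearMap.one_apply, hBFeq k]
    have t1 := aux_telescope (fun i => lp.single 2 (ray i) (1 : ℂ) :
      ℕ → lp (fun _ : E => ℂ) 2) k
    have t2 := aux_telescope (fun i => lp.single 2 (inv (ray i)) (1 : ℂ) :
      ℕ → lp (fun _ : E => ℂ) 2) k
    rw [sub_sub_sub_comm, t1,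
      show (∑ i ∈ Finset.Icc 1 k, lp.single 2 (inv (ray i)) (1 : ℂ)) -
          ∑ i ∈ Finset.range k, lp.single 2 (inv (ray i)) (1 : ℂ)
        = -((lp.single 2 (inv (ray 0)) (1 : ℂ) : lp (fun _ : E => ℂ) 2) -
            lp.single 2 (inv (ray k)) (1 : ℂ)) from by
          rw [← t2, neg_sub],
      sub_neg_eq_add]
  -- the two norm identities
  have key : ∀ k : ℕ, 1 ≤ k →
      ‖(B - 1) ((∑ i ∈ Finset.Icc 1 k, lp.single 2 (ray i) (1 : ℂ)) -
          ∑ i ∈ Finset.range k, lp.single 2 (inv (ray i)) (1 : ℂ))‖ = 2 ∧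
      ‖((∑ i ∈ Finset.Icc 1 k, lp.single 2 (ray i) (1 : ℂ)) -
          ∑ i ∈ Finset.range k, lp.single 2 (inv (ray i)) (1 : ℂ) :
          lp (fun _ : E => ℂ) 2)‖ = Real.sqrt (2 * k) := by
    intro k hk
    have hk0 : k ≠ 0 := by omega
    -- distinctness
    have d1 : ray 0 ≠ ray k := fun h => hk0 (hray_injE h).symm
    have d6 : inv (ray 0) ≠ inv (ray k) := fun h => hk0 (hray_injE (hinv_inj h)).symm
    constructor
    · -- norm of (B-1) f k
      rw [hdiff k]
      set S4 : Finset E := insert (ray 0) (insert (ray k)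
        (insert (inv (ray 0)) {inv (ray k)})) with hS4
      have hmem1 : ray 0 ∉ insert (ray k) (insert (inv (ray 0)) ({inv (ray k)} : Finset E)) := by
        simp only [Finset.mem_insert, Finset.mem_singleton]
        push_neg
        exact ⟨d1, hray_ne_inv 0 0, hray_ne_inv 0 k⟩
      have hmem2 : ray k ∉ insert (inv (ray 0)) ({inv (ray k)} : Finset E) := by
        simp only [Finset.mem_insert, Finset.mem_singleton]
        push_neg
        exact ⟨hray_ne_inv k 0, hray_ne_inv k k⟩
      have hmem3 : inv (ray 0) ∉ ({inv (ray k)} : Finset E) := by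
        simp only [Finset.mem_singleton]
        exact d6
      have heq : (lp.single 2 (ray 0) (1 : ℂ) - lp.single 2 (ray k) (1 : ℂ)) +
          (lp.single 2 (inv (ray 0)) (1 : ℂ) - lp.single 2 (inv (ray k)) (1 : ℂ))
          = ∑ e ∈ S4, lp.single 2 e
              (if e = ray 0 ∨ e = inv (ray 0) then (1 : ℂ) else -1) := by
        rw [hS4, Finset.sum_insert hmem1, Finset.sum_insert hmem2, Finset.sum_insert hmem3,
          Finset.sum_singleton]
        have v1 : (if ray 0 = ray 0 ∨ ray 0 = inv (ray 0) then (1 : ℂ) else -1) = 1 :=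
          if_pos (Or.inl rfl)
        have v2 : (if ray k = ray 0 ∨ ray k = inv (ray 0) then (1 : ℂ) else -1) = -1 :=
          if_neg (by push_neg; exact ⟨fun h => d1 h.symm, hray_ne_inv k 0⟩)
        have v3 : (if inv (ray 0) = ray 0 ∨ inv (ray 0) = inv (ray 0) then (1 : ℂ) else -1) = 1 :=
          if_pos (Or.inr rfl)
        have v4 : (if inv (ray k) = ray 0 ∨ inv (ray k) = inv (ray 0) then (1 : ℂ) else -1)
            = -1 :=
          if_neg (by push_neg; exact ⟨fun h => hray_ne_inv 0 k h.symm, fun h => d6 h.symm⟩)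
        rw [v1, v2, v3, v4]
        rw [show (lp.single 2 (ray k) (-1 : ℂ) : lp (fun _ : E => ℂ) 2)
            = -lp.single 2 (ray k) (1 : ℂ) by rw [← lp.single_neg]]
        rw [show (lp.single 2 (inv (ray k)) (-1 : ℂ) : lp (fun _ : E => ℂ) 2)
            = -lp.single 2 (inv (ray k)) (1 : ℂ) by rw [← lp.single_neg]]
        abel
      rw [heq, aux_norm_sum_single S4 _ (by
        intro e _
        by_cases h : e = ray 0 ∨ e = inv (ray 0)
        · rw [if_pos h]; simp
        · rw [if_neg h]; simp)]
      have hcard : S4.card = 4 := by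
        rw [hS4, Finset.card_insert_of_notMem hmem1, Finset.card_insert_of_notMem hmem2,
          Finset.card_insert_of_notMem hmem3, Finset.card_singleton]
      rw [hcard]
      rw [show ((4 : ℕ) : ℝ) = 2 ^ 2 by norm_num, Real.sqrt_sq (by norm_num)]
    · -- norm of f k
      set S1 : Finset E := (Finset.Icc 1 k).image ray with hS1
      set S2 : Finset E := (Finset.range k).image (fun i => inv (ray i)) with hS2
      have hS12 : Disjoint S1 S2 := by
        rw [Finset.disjoint_left]
        intro e h1 h2
        obtain ⟨i, -, rfl⟩ := Finset.mem_image.mp h1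
        obtain ⟨j, -, hj⟩ := Finset.mem_image.mp h2
        exact hray_ne_inv i j hj.symm
      have heq : ((∑ i ∈ Finset.Icc 1 k, lp.single 2 (ray i) (1 : ℂ)) -
          ∑ i ∈ Finset.range k, lp.single 2 (inv (ray i)) (1 : ℂ) :
          lp (fun _ : E => ℂ) 2)
          = ∑ e ∈ S1 ∪ S2, lp.single 2 e (if e ∈ S2 then (-1 : ℂ) else 1) := by
        rw [Finset.sum_union hS12]
        rw [hS1, hS2, Finset.sum_image (fun i _ j _ h => hray_injE h),
          Finset.sum_image (fun i _ j _ h => hray_injE (hinv_inj h))]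
        have c1 : ∀ i ∈ Finset.Icc 1 k,
            (lp.single 2 (ray i) (if ray i ∈ S2 then (-1 : ℂ) else 1) :
              lp (fun _ : E => ℂ) 2)
            = lp.single 2 (ray i) (1 : ℂ) := by
          intro i _
          rw [if_neg]
          intro hmem
          obtain ⟨j, -, hj⟩ := Finset.mem_image.mp hmem
          exact hray_ne_inv i j hj.symm
        have c2 : ∀ i ∈ Finset.range k,
            (lp.single 2 (inv (ray i)) (if inv (ray i) ∈ S2 then (-1 : ℂ) else 1) :
              lp (fun _ : E => ℂ) 2)
            = -lp.single 2 (inv (ray i)) (1 : ℂ) := by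
          intro i hi
          rw [if_pos (Finset.mem_image.mpr ⟨i, hi, rfl⟩), ← lp.single_neg]
        rw [Finset.sum_congr rfl c1, Finset.sum_congr rfl c2, Finset.sum_neg_distrib]
        abel
      rw [heq, aux_norm_sum_single _ _ (by
        intro e _
        by_cases h : e ∈ S2
        · rw [if_pos h]; simp
        · rw [if_neg h]; simp)]
      have hcard : (S1 ∪ S2).card = k + k := by
        rw [Finset.card_union_of_disjoint hS12, hS1, hS2,
          Finset.card_image_of_injective _ hray_injE,
          Finset.card_image_of_injective _ (fun i j h => hray_injE (hinv_inj h)),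
          Nat.card_Icc, Finset.card_range]
        omega
      rw [hcard]
      congr 1
      push_cast
      ring
  refine ⟨key, ?_⟩
  -- spectrum
  rw [spectrum.mem_iff]
  intro hunit
  rw [map_one] at hunit
  obtain ⟨u, hu⟩ := hunit
  set C : lp (fun _ : E => ℂ) 2 →L[ℂ] lp (fun _ : E => ℂ) 2 := ↑u⁻¹ with hC
  have hCinv : ∀ x, C ((1 - B) x) = x := by
    intro x
    have h := u.inv_mul
    rw [hu] at h
    calc C ((1 - B) x) = (C * (1 - B)) x := rfl
      _ = ((↑u⁻¹ : lp (fun _ : E => ℂ) 2 →L[ℂ] lp (fun _ : E => ℂ) 2) * ↑u) x := by rw [hu]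
      _ = x := by rw [u.inv_mul]; rfl
  -- choose k large
  set k : ℕ := ⌈(2 * ‖C‖) ^ 2⌉₊ + 1 with hkdef
  have hk1 : 1 ≤ k := Nat.le_add_left 1 _
  obtain ⟨h1, h2⟩ := key k hk1
  set f : lp (fun _ : E => ℂ) 2 := (∑ i ∈ Finset.Icc 1 k, lp.single 2 (ray i) (1 : ℂ)) -
      ∑ i ∈ Finset.range k, lp.single 2 (inv (ray i)) (1 : ℂ) with hf
  have hnorm1 : ‖(1 - B) f‖ = 2 := by
    have : (1 - B) f = -((B - 1) f) := by
      simp only [ContinuousLinearMap.sub_apply, ContinuousLinearMap.one_apply]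
      abel
    rw [this, norm_neg, h1]
  have hle : ‖f‖ ≤ ‖C‖ * 2 := by
    calc ‖f‖ = ‖C ((1 - B) f)‖ := by rw [hCinv]
      _ ≤ ‖C‖ * ‖(1 - B) f‖ := C.le_opNorm _
      _ = ‖C‖ * 2 := by rw [hnorm1]
  rw [h2] at hle
  have hlt : 2 * ‖C‖ < Real.sqrt (2 * k) := by
    rw [show (2 : ℝ) * ‖C‖ < Real.sqrt (2 * k) ↔ (2 * ‖C‖) ^ 2 < 2 * k from
      Real.lt_sqrt (by positivity)]
    have hceil : (2 * ‖C‖) ^ 2 ≤ (⌈(2 * ‖C‖) ^ 2⌉₊ : ℝ) := Nat.le_ceil _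
    have : ((⌈(2 * ‖C‖) ^ 2⌉₊ : ℕ) : ℝ) < (k : ℝ) := by
      rw [hkdef]; push_cast; linarith
    nlinarith [Nat.cast_nonneg (α := ℝ) k]
  linarith [hlt, hle]
end

section
/- Let G be an infinite, locally finite graph with minimal degree at least 2 and bounded degrees containing an infinite non-backtracking ray e_0, e_1, e_2, .... Then -1 lies in the spectrum of B, witnessed by the approximate eigenfunctions f_k = sum_{i=1}^{k} (-1)^i delta_{e_i} + sum_{i=0}^{k-1} (-1)^i delta_{e_i^{-1}}. -/
section Aux
variable {E : Type} [DecidableEq E]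

lemma nb_single_coe (a : E) (c : ℂ) (x : E) :
    (lp.single 2 a c : lp (fun _ : E => ℂ) 2) x = if x = a then c else 0 := by
  by_cases h : x = a
  · subst h; simp [lp.single_apply_self]
  · rw [if_neg h]; exact lp.single_apply_ne (E := fun _ : E => ℂ) 2 a c h

lemma nb_summable_ind (P : E → Prop) (a : E) (c : ℂ) :
    Summable (fun x : {e // P e} => if (x : E) = a then c else 0) := by
  by_cases h : P a
  · apply summable_of_ne_finset_zero (s := {(⟨a, h⟩ : {e // P e})})
    intro x hx
    refine if_neg fun hxa => hx ?_
    simp only [Finset.mem_singleton]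
    exact Subtype.ext hxa
  · have h0 : (fun x : {e // P e} => if (x : E) = a then c else 0) = fun _ => 0 := by
      funext x
      exact if_neg fun (hxa : (x:E) = a) => h (hxa ▸ x.2)
    rw [h0]; exact summable_zero

open Classical in
lemma nb_tsum_ind (P : E → Prop) (a : E) (c : ℂ) :
    ∑' x : {e // P e}, (if (x : E) = a then c else 0) = if P a then c else 0 := by
  by_cases h : P a
  · rw [if_pos h]
    refine (tsum_eq_single (⟨a, h⟩ : {e // P e}) ?_).trans (by simp)
    intro x hx
    exact if_neg fun (hxa : (x:E) = a) => hx (Subtype.ext hxa)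
  · rw [if_neg h]
    have h0 : (fun x : {e // P e} => if (x : E) = a then c else 0) = fun _ => 0 := by
      funext x
      exact if_neg fun (hxa : (x:E) = a) => h (hxa ▸ x.2)
    rw [h0]; exact tsum_zero

end Aux

theorem nb_main_aux
    {V E : Type} [DecidableEq E] (tail head : E → V) (inv : E → E)
    (hinv_inv : ∀ e, inv (inv e) = e)
    (htail_inv : ∀ e, tail (inv e) = head e)
    (follows : E → E → Prop)
    (hfollows : ∀ e e', follows e e' ↔ head e = tail e' ∧ e' ≠ inv e)
    (B : lp (fun _ : E => ℂ) 2 →L[ℂ] lp (fun _ : E => ℂ) 2)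
    (hB : ∀ f e, B f e = ∑' e' : {e' : E // follows e e'}, f e')
    (ray : ℕ → E)
    (hray : ∀ i, follows (ray i) (ray (i + 1)))
    (hray_inj : Function.Injective fun i => tail (ray i)) :
    ∀ k : ℕ, 1 ≤ k →
      ((∑ i ∈ Finset.Icc 1 k, ((-1 : ℂ) ^ i) • lp.single 2 (ray i) (1 : ℂ)) +
        ∑ i ∈ Finset.range k, ((-1 : ℂ) ^ i) • lp.single 2 (inv (ray i)) (1 : ℂ) :
        lp (fun _ : E => ℂ) 2) ≠ 0 ∧
      ‖(B - (-1 : ℂ) • 1) ((∑ i ∈ Finset.Icc 1 k, ((-1 : ℂ) ^ i) • lp.single 2 (ray i) (1 : ℂ)) +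
        ∑ i ∈ Finset.range k, ((-1 : ℂ) ^ i) • lp.single 2 (inv (ray i)) (1 : ℂ))‖ ≤ 4 ∧
      Real.sqrt k ≤ ‖((∑ i ∈ Finset.Icc 1 k, ((-1 : ℂ) ^ i) • lp.single 2 (ray i) (1 : ℂ)) +
        ∑ i ∈ Finset.range k, ((-1 : ℂ) ^ i) • lp.single 2 (inv (ray i)) (1 : ℂ) :
        lp (fun _ : E => ℂ) 2)‖ := by
  classical
  have hray' : ∀ j, head (ray j) = tail (ray (j+1)) := fun j => ((hfollows _ _).1 (hray j)).1
  have hray'' : ∀ j, ray (j+1) ≠ inv (ray j) := fun j => ((hfollows _ _).1 (hray j)).2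
  have hhead_inv : ∀ e, head (inv e) = tail e := fun e => by
    have h := htail_inv (inv e); rw [hinv_inv] at h; exact h.symm
  have hrayInj : Function.Injective ray := fun i j h => hray_inj (congrArg tail h)
  intro k hk
  set F : lp (fun _ : E => ℂ) 2 :=
    (∑ i ∈ Finset.Icc 1 k, ((-1 : ℂ) ^ i) • lp.single 2 (ray i) (1 : ℂ)) +
      ∑ i ∈ Finset.range k, ((-1 : ℂ) ^ i) • lp.single 2 (inv (ray i)) (1 : ℂ) with hFdef
  have hFapp : ∀ x : E, F x =
      (∑ i ∈ Finset.Icc 1 k, (-1:ℂ)^i * (if x = ray i then 1 else 0)) +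
        ∑ i ∈ Finset.range k, (-1:ℂ)^i * (if x = inv (ray i) then 1 else 0) := by
    intro x
    rw [hFdef]
    simp only [lp.coeFn_add, Pi.add_apply, lp.coeFn_sum, Finset.sum_apply,
      lp.coeFn_smul, Pi.smul_apply, nb_single_coe, smul_eq_mul]
  have hBapp : ∀ x : E, (B F) x =
      ∑ j ∈ Finset.range k,
        ((-1:ℂ)^j * (if x = inv (ray (j+1)) then 1 else 0)
          + (-1:ℂ)^(j+1) * (if x = ray j then 1 else 0)) := by
    intro x
    rw [hB]
    rw [tsum_congr (fun e' : {e' // follows x e'} => hFapp e')]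
    have sA : Summable (fun e' : {e' : E // follows x e'} =>
        ∑ i ∈ Finset.Icc 1 k, (-1:ℂ)^i * (if (e':E) = ray i then 1 else 0)) :=
      summable_sum (fun i _ => (nb_summable_ind _ _ _).mul_left _)
    have sB : Summable (fun e' : {e' : E // follows x e'} =>
        ∑ i ∈ Finset.range k, (-1:ℂ)^i * (if (e':E) = inv (ray i) then 1 else 0)) :=
      summable_sum (fun i _ => (nb_summable_ind _ _ _).mul_left _)
    rw [Summable.tsum_add sA sB,
        Summable.tsum_finsetSum (fun i _ => (nb_summable_ind _ _ _).mul_left _),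
        Summable.tsum_finsetSum (fun i _ => (nb_summable_ind _ _ _).mul_left _)]
    simp only [tsum_mul_left, nb_tsum_ind]
    rw [← Finset.Ico_add_one_right_eq_Icc, Finset.sum_Ico_eq_sum_range]
    simp only [Nat.add_sub_cancel]
    rw [← Finset.sum_add_distrib]
    refine Finset.sum_congr rfl ?_
    intro j _
    rw [Nat.add_comm 1 j]
    by_cases h1 : x = inv (ray (j+1))
    · have hx1 : ¬ follows x (ray (j+1)) := by
        rw [hfollows]; rintro ⟨-, hne⟩
        exact hne (by rw [h1, hinv_inv])
      have hx2 : follows x (inv (ray j)) := by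
        rw [hfollows]
        refine ⟨by rw [h1, hhead_inv, htail_inv]; exact (hray' j).symm, ?_⟩
        rw [h1, hinv_inv]
        exact fun hc => hray'' j hc.symm
      have hx3 : x ≠ ray j := by
        rw [h1]; intro hc
        exact hray'' j (by rw [← hc, hinv_inv])
      simp only [if_pos h1, if_neg hx1, if_neg hx3, if_pos hx2]
      ring
    · by_cases h2 : x = ray j
      · have hx1 : follows x (ray (j+1)) := by
          rw [hfollows]
          exact ⟨by rw [h2]; exact hray' j, by rw [h2]; exact hray'' j⟩
        have hx2 : ¬ follows x (inv (ray j)) := by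
          rw [hfollows]; rintro ⟨-, hne⟩
          exact hne (by rw [h2])
        simp only [if_neg h1, if_pos h2, if_pos hx1, if_neg hx2]
        ring
      · by_cases hv : head x = tail (ray (j+1))
        · have hx1 : follows x (ray (j+1)) := by
            rw [hfollows]
            exact ⟨hv, fun hc => h1 (by rw [hc, hinv_inv])⟩
          have hx2 : follows x (inv (ray j)) := by
            rw [hfollows]
            refine ⟨by rw [htail_inv, hray' j]; exact hv, ?_⟩
            exact fun hc => h2 (by rw [← hinv_inv x, ← hc, hinv_inv])
          simp only [if_neg h1, if_neg h2, if_pos hx1, if_pos hx2]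
          rw [pow_add, pow_succ]
          ring
        · have hx1 : ¬ follows x (ray (j+1)) := by
            rw [hfollows]; rintro ⟨hc, -⟩; exact hv hc
          have hx2 : ¬ follows x (inv (ray j)) := by
            rw [hfollows]; rintro ⟨hc, -⟩
            rw [htail_inv, hray' j] at hc
            exact hv hc
          simp only [if_neg h1, if_neg h2, if_neg hx1, if_neg hx2]
          ring
  set u : ℕ → lp (fun _ : E => ℂ) 2 := fun j => ((-1:ℂ)^j) • lp.single 2 (inv (ray j)) (1:ℂ)
    with hu
  set w : ℕ → lp (fun _ : E => ℂ) 2 := fun j => ((-1:ℂ)^(j+1)) • lp.single 2 (ray j) (1:ℂ)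
    with hw
  have hBF : B F = ∑ j ∈ Finset.range k,
      (((-1:ℂ)^j) • lp.single 2 (inv (ray (j+1))) (1:ℂ)
        + ((-1:ℂ)^(j+1)) • lp.single 2 (ray j) (1:ℂ)) := by
    apply lp.ext
    funext x
    rw [hBapp x]
    simp only [lp.coeFn_sum, Finset.sum_apply, lp.coeFn_add, Pi.add_apply,
      lp.coeFn_smul, Pi.smul_apply, nb_single_coe, smul_eq_mul]
  have hkey : B F + F = (u 0 - u k) + (w 0 - w k) := by
    have hIcc : (∑ i ∈ Finset.Icc 1 k, ((-1:ℂ)^i) • lp.single 2 (ray i) (1:ℂ)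
          : lp (fun _ : E => ℂ) 2)
        = ∑ j ∈ Finset.range k, ((-1:ℂ)^(1+j)) • lp.single 2 (ray (1+j)) (1:ℂ) := by
      rw [← Finset.Ico_add_one_right_eq_Icc, Finset.sum_Ico_eq_sum_range]
      simp only [Nat.add_sub_cancel]
    rw [hBF, hFdef, hIcc, ← Finset.sum_range_sub' u k, ← Finset.sum_range_sub' w k,
      ← Finset.sum_add_distrib, ← Finset.sum_add_distrib, ← Finset.sum_add_distrib]
    refine Finset.sum_congr rfl ?_
    intro j _
    rw [hu, hw]
    simp only
    rw [Nat.add_comm 1 j]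
    rw [pow_succ, pow_succ, pow_succ]
    module
  have happ : (B - (-1:ℂ) • 1) F = B F + F := by
    simp only [ContinuousLinearMap.sub_apply, ContinuousLinearMap.smul_apply,
      ContinuousLinearMap.add_apply, ContinuousLinearMap.one_apply, neg_smul, one_smul,
      sub_neg_eq_add]
  have hsingle : ∀ (a : E) (c : ℂ), ‖(lp.single 2 a c : lp (fun _ : E => ℂ) 2)‖ = ‖c‖ := by
    intro a c
    have h := lp.norm_single (p := 2) (E := fun _ : E => ℂ) (by norm_num) a c
    simpa using h
  have hnu : ∀ j, ‖u j‖ = 1 := by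
    intro j
    rw [hu]
    simp only
    rw [norm_smul, hsingle]
    simp
  have hnw : ∀ j, ‖w j‖ = 1 := by
    intro j
    rw [hw]
    simp only
    rw [norm_smul, hsingle]
    simp
  have hnorm4 : ‖(B - (-1:ℂ) • 1) F‖ ≤ 4 := by
    rw [happ, hkey]
    calc ‖(u 0 - u k) + (w 0 - w k)‖ ≤ ‖u 0 - u k‖ + ‖w 0 - w k‖ := norm_add_le _ _
      _ ≤ (‖u 0‖ + ‖u k‖) + (‖w 0‖ + ‖w k‖) := add_le_add (norm_sub_le _ _) (norm_sub_le _ _)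
      _ = 4 := by rw [hnu, hnu, hnw, hnw]; norm_num
  have hFray : ∀ i ∈ Finset.Icc 1 k, F (ray i) = (-1:ℂ)^i := by
    intro i hi
    rw [hFapp]
    have h2 : ∑ j ∈ Finset.range k, (-1:ℂ)^j * (if ray i = inv (ray j) then 1 else 0) = 0 := by
      apply Finset.sum_eq_zero
      intro j _
      rw [if_neg, mul_zero]
      intro hc
      have ht : (fun i => tail (ray i)) i = (fun i => tail (ray i)) (j+1) := by
        simp only
        rw [hc, htail_inv]
        exact hray' j
      have hij : i = j + 1 := hray_inj ht
      rw [hij] at hc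
      exact hray'' j hc
    have h1 : ∑ i' ∈ Finset.Icc 1 k, (-1:ℂ)^i' * (if ray i = ray i' then 1 else 0)
        = (-1:ℂ)^i := by
      rw [Finset.sum_eq_single_of_mem i hi]
      · rw [if_pos rfl, mul_one]
      · intro b _ hb
        rw [if_neg (fun hc => hb ((hrayInj hc).symm)), mul_zero]
    rw [h1, h2, add_zero]
  have hFne : F ≠ 0 := by
    intro h0
    have h1 := hFray 1 (Finset.mem_Icc.mpr ⟨le_refl 1, hk⟩)
    rw [h0] at h1
    simp at h1
  have hlow : Real.sqrt k ≤ ‖F‖ := by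
    have hsum : ((k:ℝ)) ≤ ‖F‖ ^ (2:ℝ) := by
      have h := lp.sum_rpow_le_norm_rpow (p := 2) (E := fun _ : E => ℂ) (by norm_num) F
        ((Finset.Icc 1 k).image ray)
      rw [show ((2:ENNReal)).toReal = (2:ℝ) by norm_num] at h
      refine le_trans ?_ h
      rw [Finset.sum_image (fun a _ b _ hab => hrayInj hab)]
      have hone : ∀ i ∈ Finset.Icc 1 k, ‖F (ray i)‖ ^ (2:ℝ) = 1 := by
        intro i hi
        rw [hFray i hi]
        simp
      rw [Finset.sum_congr rfl hone]
      simp [Nat.card_Icc]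
    have h2 : Real.sqrt k ≤ Real.sqrt (‖F‖ ^ (2:ℝ)) := Real.sqrt_le_sqrt hsum
    rwa [show ‖F‖ ^ (2:ℝ) = ‖F‖^2 by
        rw [show (2:ℝ) = ((2:ℕ):ℝ) by norm_num, Real.rpow_natCast],
      Real.sqrt_sq (norm_nonneg F)] at h2
  exact ⟨hFne, hnorm4, hlow⟩

/-- For an infinite, locally finite graph with minimal degree at least 2 and
bounded degrees containing an infinite non-backtracking ray, `-1` lies in the spectrum of
the non-backtracking operator `B`, witnessed by the approximate eigenfunctions
`f k = ∑_{i=1}^{k} (-1)^i δ_{e i} + ∑_{i=0}^{k-1} (-1)^i δ_{(e i)⁻¹}`. -/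
theorem neg_one_mem_spectrum_nonbacktracking
    {V E : Type} [DecidableEq E] (tail head : E → V) (inv : E → E)
    (hinv_inv : ∀ e, inv (inv e) = e)
    (hinv_ne : ∀ e, inv e ≠ e)
    (htail_inv : ∀ e, tail (inv e) = head e)
    (follows : E → E → Prop)
    (hfollows : ∀ e e', follows e e' ↔ head e = tail e' ∧ e' ≠ inv e)
    (hinfinite : Infinite V)
    (dmax : ℕ)
    (hdeg : ∀ v : V, 2 ≤ Nat.card {e : E // tail e = v} ∧
      Nat.card {e : E // tail e = v} ≤ dmax)
    (B : lp (fun _ : E => ℂ) 2 →L[ℂ] lp (fun _ : E => ℂ) 2)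
    (hB : ∀ f e, B f e = ∑' e' : {e' : E // follows e e'}, f e')
    -- an infinite non-backtracking ray (a simple ray: the tails are pairwise distinct)
    (ray : ℕ → E)
    (hray : ∀ i, follows (ray i) (ray (i + 1)))
    (hray_inj : Function.Injective fun i => tail (ray i)) :
    (∀ ε : ℝ, 0 < ε → ∃ k : ℕ, 1 ≤ k ∧
      ((∑ i ∈ Finset.Icc 1 k, ((-1 : ℂ) ^ i) • lp.single 2 (ray i) (1 : ℂ)) +
          ∑ i ∈ Finset.range k, ((-1 : ℂ) ^ i) • lp.single 2 (inv (ray i)) (1 : ℂ) :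
          lp (fun _ : E => ℂ) 2) ≠ 0 ∧
      ‖(B - (-1 : ℂ) • 1)
          ((∑ i ∈ Finset.Icc 1 k, ((-1 : ℂ) ^ i) • lp.single 2 (ray i) (1 : ℂ)) +
            ∑ i ∈ Finset.range k, ((-1 : ℂ) ^ i) • lp.single 2 (inv (ray i)) (1 : ℂ))‖ ≤
        ε * ‖((∑ i ∈ Finset.Icc 1 k, ((-1 : ℂ) ^ i) • lp.single 2 (ray i) (1 : ℂ)) +
            ∑ i ∈ Finset.range k, ((-1 : ℂ) ^ i) • lp.single 2 (inv (ray i)) (1 : ℂ) :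
            lp (fun _ : E => ℂ) 2)‖) ∧
    (-1 : ℂ) ∈ spectrum ℂ B := by
  have main := nb_main_aux tail head inv hinv_inv htail_inv follows hfollows B hB
    ray hray hray_inj
  have part1 : ∀ ε : ℝ, 0 < ε → ∃ k : ℕ, 1 ≤ k ∧
      ((∑ i ∈ Finset.Icc 1 k, ((-1 : ℂ) ^ i) • lp.single 2 (ray i) (1 : ℂ)) +
          ∑ i ∈ Finset.range k, ((-1 : ℂ) ^ i) • lp.single 2 (inv (ray i)) (1 : ℂ) :
          lp (fun _ : E => ℂ) 2) ≠ 0 ∧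
      ‖(B - (-1 : ℂ) • 1)
          ((∑ i ∈ Finset.Icc 1 k, ((-1 : ℂ) ^ i) • lp.single 2 (ray i) (1 : ℂ)) +
            ∑ i ∈ Finset.range k, ((-1 : ℂ) ^ i) • lp.single 2 (inv (ray i)) (1 : ℂ))‖ ≤
        ε * ‖((∑ i ∈ Finset.Icc 1 k, ((-1 : ℂ) ^ i) • lp.single 2 (ray i) (1 : ℂ)) +
            ∑ i ∈ Finset.range k, ((-1 : ℂ) ^ i) • lp.single 2 (inv (ray i)) (1 : ℂ) :
            lp (fun _ : E => ℂ) 2)‖ := by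
    intro ε hε
    obtain ⟨k, hk1, hk2⟩ : ∃ k : ℕ, 1 ≤ k ∧ (4/ε) ≤ Real.sqrt k := by
      refine ⟨max 1 ⌈(4/ε)^2⌉₊, le_max_left _ _, ?_⟩
      have h1 : (4/ε)^2 ≤ ((max 1 ⌈(4/ε)^2⌉₊ : ℕ) : ℝ) :=
        le_trans (Nat.le_ceil _) (by exact_mod_cast Nat.cast_le.mpr (le_max_right _ _))
      calc 4/ε = Real.sqrt ((4/ε)^2) := (Real.sqrt_sq (by positivity)).symm
        _ ≤ _ := Real.sqrt_le_sqrt h1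
    obtain ⟨hne, h4, hlow⟩ := main k hk1
    refine ⟨k, hk1, hne, ?_⟩
    calc ‖_‖ ≤ 4 := h4
      _ = ε * (4/ε) := by field_simp
      _ ≤ ε * _ := mul_le_mul_of_nonneg_left (le_trans hk2 hlow) hε.le
  refine ⟨part1, ?_⟩
  rw [spectrum.mem_iff]
  intro hunit
  rw [Algebra.algebraMap_eq_smul_one] at hunit
  obtain ⟨u, hu⟩ := hunit
  set C := ‖(↑u⁻¹ : lp (fun _ : E => ℂ) 2 →L[ℂ] lp (fun _ : E => ℂ) 2)‖ with hC
  have hC0 : (0:ℝ) ≤ C := norm_nonneg _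
  have hC1 : (0:ℝ) < C + 1 := by linarith
  have key : ∀ f : lp (fun _ : E => ℂ) 2, ‖f‖ ≤ C * ‖(B - (-1:ℂ) • 1) f‖ := by
    intro f
    have h1 : (↑u⁻¹ : lp (fun _ : E => ℂ) 2 →L[ℂ] lp (fun _ : E => ℂ) 2) ((↑u : _ →L[ℂ] _) f)
        = f := by
      rw [← ContinuousLinearMap.mul_apply, u.inv_mul, ContinuousLinearMap.one_apply]
    have h2 : ((↑u : lp (fun _ : E => ℂ) 2 →L[ℂ] lp (fun _ : E => ℂ) 2) f)
        = -((B - (-1:ℂ) • 1) f) := by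
      rw [hu, ← neg_sub B ((-1:ℂ) • 1), ContinuousLinearMap.neg_apply]
    calc ‖f‖ = ‖(↑u⁻¹ : lp (fun _ : E => ℂ) 2 →L[ℂ] lp (fun _ : E => ℂ) 2)
          ((↑u : _ →L[ℂ] _) f)‖ := by rw [h1]
      _ ≤ C * ‖(↑u : lp (fun _ : E => ℂ) 2 →L[ℂ] lp (fun _ : E => ℂ) 2) f‖ :=
          ContinuousLinearMap.le_opNorm _ _
      _ = C * ‖(B - (-1:ℂ) • 1) f‖ := by rw [h2, norm_neg]
  obtain ⟨k, hk1, hne, hb⟩ := part1 (1/(C+1)) (by positivity)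
  set F : lp (fun _ : E => ℂ) 2 :=
    (∑ i ∈ Finset.Icc 1 k, ((-1 : ℂ) ^ i) • lp.single 2 (ray i) (1 : ℂ)) +
      ∑ i ∈ Finset.range k, ((-1 : ℂ) ^ i) • lp.single 2 (inv (ray i)) (1 : ℂ) with hFdef
  have hnpos : 0 < ‖F‖ := norm_pos_iff.mpr hne
  have h3 : ‖F‖ ≤ C * (1/(C+1) * ‖F‖) :=
    le_trans (key F) (mul_le_mul_of_nonneg_left hb hC0)
  have h4 : C * (1/(C+1) * ‖F‖) = (C/(C+1)) * ‖F‖ := by ring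
  have h5 : C/(C+1) < 1 := by rw [div_lt_one hC1]; linarith
  have h6 : C/(C+1) * ‖F‖ < 1 * ‖F‖ := mul_lt_mul_of_pos_right h5 hnpos
  rw [one_mul] at h6
  rw [h4] at h3
  exact absurd (lt_of_le_of_lt h3 h6) (lt_irrefl _)
end

section
/- Let G be a graph with minimal degree at least 2 and maximal degree d_max. For every nonzero f in l^2 of the directed edges, ||Bf|| / ||f|| lies in the interval [1, d_max - 1]. Consequently the spectrum of B is contained in the annulus {lambda in C : 1 <= |lambda| <= d_max - 1}. -/
open scoped ENNReal

namespace NB4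

lemma le_of_sq_le_sq' {a b : ℝ} (hb : 0 ≤ b) (h : a ^ 2 ≤ b ^ 2) (ha : 0 ≤ a) : a ≤ b := by
  nlinarith

lemma block_id {ι : Type} [Fintype ι] (x : ι → ℂ) :
    ∑ i, ‖(∑ j, x j) - x i‖ ^ 2
      = ((Fintype.card ι : ℝ) - 2) * ‖∑ j, x j‖ ^ 2 + ∑ i, ‖x i‖ ^ 2 := by
  have hns : ∀ z : ℂ, ‖z‖ ^ 2 = Complex.normSq z := fun z => by
    rw [Complex.sq_norm]
  simp only [hns]
  set s := ∑ j, x j with hs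
  have h2 : ∑ i, (s * (starRingEnd ℂ) (x i)).re = Complex.normSq s := by
    have h3 : ∑ i, s * (starRingEnd ℂ) (x i) = s * (starRingEnd ℂ) s := by
      rw [← Finset.mul_sum, ← map_sum]
    calc ∑ i, (s * (starRingEnd ℂ) (x i)).re
        = (∑ i, s * (starRingEnd ℂ) (x i)).re := by rw [Complex.re_sum]
      _ = (s * (starRingEnd ℂ) s).re := by rw [h3]
      _ = Complex.normSq s := by rw [Complex.mul_conj]; simp
  calc ∑ i, Complex.normSq (s - x i)
      = ∑ i, (Complex.normSq s + Complex.normSq (x i)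
          - 2 * (s * (starRingEnd ℂ) (x i)).re) := by
        simp only [Complex.normSq_sub]
    _ = (Fintype.card ι : ℝ) * Complex.normSq s + ∑ i, Complex.normSq (x i)
          - 2 * ∑ i, (s * (starRingEnd ℂ) (x i)).re := by
        rw [Finset.sum_sub_distrib, Finset.sum_add_distrib, Finset.sum_const,
          Finset.card_univ, nsmul_eq_mul, Finset.mul_sum]
    _ = _ := by rw [h2]; ring

lemma block_lower {ι : Type} [Fintype ι] (h2 : 2 ≤ Fintype.card ι) (x : ι → ℂ) :
    ∑ i, ‖x i‖ ^ 2 ≤ ∑ i, ‖(∑ j, x j) - x i‖ ^ 2 := by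
  rw [block_id]
  have hc : (2 : ℝ) ≤ (Fintype.card ι : ℝ) := by exact_mod_cast h2
  nlinarith [sq_nonneg ‖∑ j, x j‖]

lemma block_upper {ι : Type} [Fintype ι] {dm : ℕ} (h2 : 2 ≤ Fintype.card ι)
    (hd : Fintype.card ι ≤ dm) (x : ι → ℂ) :
    ∑ i, ‖(∑ j, x j) - x i‖ ^ 2 ≤ ((dm : ℝ) - 1) ^ 2 * ∑ i, ‖x i‖ ^ 2 := by
  rw [block_id]
  have hc2 : (2 : ℝ) ≤ (Fintype.card ι : ℝ) := by exact_mod_cast h2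
  have hcd : (Fintype.card ι : ℝ) ≤ (dm : ℝ) := by exact_mod_cast hd
  have hcs : ‖∑ j, x j‖ ^ 2 ≤ (Fintype.card ι : ℝ) * ∑ i, ‖x i‖ ^ 2 := by
    calc ‖∑ j, x j‖ ^ 2 ≤ (∑ j, ‖x j‖) ^ 2 := by
          apply pow_le_pow_left₀ (norm_nonneg _) (norm_sum_le _ _)
      _ ≤ (Fintype.card ι : ℝ) * ∑ i, ‖x i‖ ^ 2 := by
          have := sq_sum_le_card_mul_sum_sq (s := (Finset.univ : Finset ι))
            (f := fun j => ‖x j‖)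
          simpa [Finset.card_univ] using this
  have hxnn : 0 ≤ ∑ i, ‖x i‖ ^ 2 :=
    Finset.sum_nonneg fun i _ => sq_nonneg _
  nlinarith [mul_le_mul_of_nonneg_left hcs (by linarith : (0:ℝ) ≤ (Fintype.card ι : ℝ) - 2),
    mul_nonneg (mul_nonneg (sub_nonneg.mpr hcd)
      (by linarith : (0:ℝ) ≤ (dm : ℝ) + (Fintype.card ι : ℝ) - 2)) hxnn,
    sq_nonneg ‖∑ j, x j‖]

lemma lp_norm_sq {E : Type} (f : lp (fun _ : E => ℂ) 2) : ‖f‖ ^ 2 = ∑' e, ‖f e‖ ^ 2 := by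
  have h := lp.norm_rpow_eq_tsum (p := 2) (by norm_num) f
  have h2 : ∀ x : ℝ, x ^ ((2 : ℝ≥0∞).toReal) = x ^ (2 : ℕ) := fun x => by
    rw [show (2 : ℝ≥0∞).toReal = ((2 : ℕ) : ℝ) by norm_num, Real.rpow_natCast]
  simp only [h2] at h
  exact h

lemma lp_summable_sq {E : Type} (f : lp (fun _ : E => ℂ) 2) :
    Summable fun e => ‖f e‖ ^ 2 := by
  have h := lp.memℓp f
  rw [memℓp_gen_iff (by norm_num)] at h
  have h2 : ∀ x : ℝ, x ^ ((2 : ℝ≥0∞).toReal) = x ^ (2 : ℕ) := fun x => by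
    rw [show (2 : ℝ≥0∞).toReal = ((2 : ℕ) : ℝ) by norm_num, Real.rpow_natCast]
  simpa only [h2] using h

section fib
variable {V E : Type} (tail : E → V) [inst : ∀ v, Fintype {e : E // tail e = v}]

lemma tsum_fiber (h : E → ℝ) (hsum : Summable h) :
    ∑' e, h e = ∑' v, ∑ x : {e : E // tail e = v}, h x := by
  have hs : Summable fun p : Σ v, {e : E // tail e = v} =>
      h ((Equiv.sigmaFiberEquiv tail) p) :=
    ((Equiv.sigmaFiberEquiv tail).summable_iff).mpr hsum
  rw [← (Equiv.sigmaFiberEquiv tail).tsum_eq h, hs.tsum_sigma]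
  exact tsum_congr fun v => tsum_fintype _

lemma summable_fiber (h : E → ℝ) (hsum : Summable h) :
    Summable fun v => ∑ x : {e : E // tail e = v}, h x := by
  have hs : Summable fun p : Σ v, {e : E // tail e = v} =>
      h ((Equiv.sigmaFiberEquiv tail) p) :=
    ((Equiv.sigmaFiberEquiv tail).summable_iff).mpr hsum
  have := hs.sigma
  simpa only [tsum_fintype, Equiv.sigmaFiberEquiv_apply] using this

lemma summable_of_fiber_bound (h k : E → ℝ) (hh : ∀ e, 0 ≤ h e)
    (hb : ∀ v, (∑ x : {e : E // tail e = v}, h x.1)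
      ≤ ∑ x : {e : E // tail e = v}, k x.1)
    (hknn : ∀ e, 0 ≤ k e) (hk : Summable k) : Summable h := by
  have h1 : Summable fun p : Σ v, {e : E // tail e = v} => h p.2.1 := by
    apply (summable_sigma_of_nonneg (fun p => hh _)).mpr
    constructor
    · intro v; exact Summable.of_finite
    · apply Summable.of_nonneg_of_le (fun v => tsum_nonneg fun x => hh _) _
        (summable_fiber tail k hk)
      intro v
      rw [tsum_fintype]
      exact hb v
  exact ((Equiv.sigmaFiberEquiv tail).summable_iff).mp h1

end fib

end NB4

set_option maxHeartbeats 1000000 in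
/-- For a graph with minimal degree at least 2 and maximal degree `dmax`,
for every nonzero `f` in `ℓ²` of the directed edges, `‖Bf‖/‖f‖ ∈ [1, dmax - 1]`;
consequently the spectrum of `B` is contained in the annulus
`{λ : 1 ≤ |λ| ≤ dmax - 1}`. -/
theorem nonbacktracking_norm_bounds_and_annulus
    {V E : Type} (tail head : E → V) (inv : E → E)
    (hinv_inv : ∀ e, inv (inv e) = e)
    (hinv_ne : ∀ e, inv e ≠ e)
    (htail_inv : ∀ e, tail (inv e) = head e)
    (follows : E → E → Prop)
    (hfollows : ∀ e e', follows e e' ↔ head e = tail e' ∧ e' ≠ inv e)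
    (dmax : ℕ)
    (hdeg : ∀ v : V, 2 ≤ Nat.card {e : E // tail e = v} ∧
      Nat.card {e : E // tail e = v} ≤ dmax)
    (B : lp (fun _ : E => ℂ) 2 →L[ℂ] lp (fun _ : E => ℂ) 2)
    (hB : ∀ f e, B f e = ∑' e' : {e' : E // follows e e'}, f e') :
    (∀ f : lp (fun _ : E => ℂ) 2, f ≠ 0 →
      ‖f‖ ≤ ‖B f‖ ∧ ‖B f‖ ≤ ((dmax : ℝ) - 1) * ‖f‖) ∧
    spectrum ℂ B ⊆ {lam : ℂ | 1 ≤ ‖lam‖ ∧ ‖lam‖ ≤ (dmax : ℝ) - 1} := by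
  classical
  by_cases hE : Nonempty E
  swap
  · haveI : IsEmpty E := not_nonempty_iff.mp hE
    haveI : Subsingleton (lp (fun _ : E => ℂ) 2) :=
      ⟨fun f g => lp.ext (Subsingleton.elim _ _)⟩
    haveI : Subsingleton (lp (fun _ : E => ℂ) 2 →L[ℂ] lp (fun _ : E => ℂ) 2) :=
      ⟨fun S T => ContinuousLinearMap.ext fun x => Subsingleton.elim _ _⟩
    constructor
    · intro f hf; exact absurd (Subsingleton.elim f 0) hf
    · intro lam hlam
      exact absurd (isUnit_of_subsingleton _) (spectrum.mem_iff.mp hlam)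
  · obtain ⟨e₀⟩ := hE
    haveI hFibFin : ∀ v : V, Finite {e : E // tail e = v} := fun v =>
      (Nat.card_pos_iff.mp (lt_of_lt_of_le (by norm_num) (hdeg v).1)).2
    letI hFib : ∀ v : V, Fintype {e : E // tail e = v} := fun v => Fintype.ofFinite _
    have hd2 : ∀ v, 2 ≤ Fintype.card {e : E // tail e = v} := fun v => by
      have := (hdeg v).1; rwa [Nat.card_eq_fintype_card] at this
    have hdle : ∀ v, Fintype.card {e : E // tail e = v} ≤ dmax := fun v => by
      have := (hdeg v).2; rwa [Nat.card_eq_fintype_card] at this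
    have hdmax : 2 ≤ dmax := le_trans (hd2 (tail e₀)) (hdle (tail e₀))
    have hdmaxR : (2 : ℝ) ≤ (dmax : ℝ) := by exact_mod_cast hdmax
    -- pointwise formula
    have hBinv : ∀ (f : lp (fun _ : E => ℂ) 2) (e : E),
        B f (inv e) = (∑ x : {e' : E // tail e' = tail e}, f x.1) - f e := by
      intro f e
      rw [hB]
      have hhead : head (inv e) = tail e := by
        have h := htail_inv (inv e)
        rw [hinv_inv] at h
        exact h.symm
      have key : ∀ e', follows (inv e) e' ↔ tail e' = tail e ∧ e' ≠ e := by
        intro e'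
        rw [hfollows, hinv_inv, hhead]
        exact and_congr_left' eq_comm
      have hmem : (⟨e, rfl⟩ : {e' : E // tail e' = tail e}) ∈
          (Finset.univ : Finset {e' : E // tail e' = tail e}) := Finset.mem_univ _
      have h1 : (∑' e' : {e' : E // follows (inv e) e'}, f e'.1)
          = ∑ x ∈ (Finset.univ.erase (⟨e, rfl⟩ : {e' : E // tail e' = tail e})),
              f x.1 := by
        rw [← Finset.tsum_subtype
          (Finset.univ.erase (⟨e, rfl⟩ : {e' : E // tail e' = tail e}))
          (fun x : {e' : E // tail e' = tail e} => f x.1)]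
        let eqv : {e' : E // follows (inv e) e'} ≃
            {x : {e' : E // tail e' = tail e} //
              x ∈ Finset.univ.erase (⟨e, rfl⟩ : {e' : E // tail e' = tail e})} :=
          { toFun := fun y => ⟨⟨y.1, ((key y.1).mp y.2).1⟩, by
              rw [Finset.mem_erase]
              exact ⟨fun h => ((key y.1).mp y.2).2 (congrArg Subtype.val h),
                Finset.mem_univ _⟩⟩
            invFun := fun x => ⟨x.1.1, (key x.1.1).mpr ⟨x.1.2, fun h => by
              exact (Finset.mem_erase.mp x.2).1 (Subtype.ext h)⟩⟩
            left_inv := fun y => rfl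
            right_inv := fun x => rfl }
        exact Eq.trans
          (tsum_congr (fun y => (rfl : (f : E → ℂ) y.1 = (f : E → ℂ) (eqv y).1.1)))
          (eqv.tsum_eq (fun x => (f : E → ℂ) x.1.1))
      rw [h1, eq_sub_iff_add_eq, add_comm]
      exact Finset.add_sum_erase Finset.univ
        (fun x : {e' : E // tail e' = tail e} => f x.1) hmem
    have hBinv' : ∀ (f : lp (fun _ : E => ℂ) 2) (v : V) (x : {e : E // tail e = v}),
        B f (inv x.1) = (∑ j : {e : E // tail e = v}, f j.1) - f x.1 := by
      rintro f v ⟨x, rfl⟩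
      exact hBinv f x
    -- reindexing by inv
    have hinvsummable : ∀ f : lp (fun _ : E => ℂ) 2,
        Summable fun e => ‖f (inv e)‖ ^ 2 := by
      intro f
      have := (Function.Involutive.toPerm inv hinv_inv).summable_iff.mpr
        (NB4.lp_summable_sq f)
      exact this
    have hinvtsum : ∀ f : lp (fun _ : E => ℂ) 2,
        ∑' e, ‖f e‖ ^ 2 = ∑' e, ‖f (inv e)‖ ^ 2 := by
      intro f
      have := (Function.Involutive.toPerm inv hinv_inv).tsum_eq
        (fun e => ‖f e‖ ^ 2)
      exact this.symm
    -- lower bound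
    have hlowsq : ∀ f : lp (fun _ : E => ℂ) 2, ‖f‖ ^ 2 ≤ ‖B f‖ ^ 2 := by
      intro f
      rw [NB4.lp_norm_sq f, NB4.lp_norm_sq (B f), hinvtsum (B f)]
      have hsf := NB4.lp_summable_sq f
      have hsBf := hinvsummable (B f)
      rw [NB4.tsum_fiber tail _ hsf, NB4.tsum_fiber tail _ hsBf]
      apply Summable.tsum_le_tsum _ (NB4.summable_fiber tail _ hsf)
        (NB4.summable_fiber tail _ hsBf)
      intro v
      refine (NB4.block_lower (hd2 v) (fun x : {e : E // tail e = v} => f x.1)).trans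
        (le_of_eq ?_)
      apply Finset.sum_congr rfl
      intro x _
      rw [hBinv' f v x]
    have hlow : ∀ f : lp (fun _ : E => ℂ) 2, ‖f‖ ≤ ‖B f‖ := fun f =>
      NB4.le_of_sq_le_sq' (norm_nonneg _) (hlowsq f) (norm_nonneg _)
    -- upper bound
    have hup : ∀ f : lp (fun _ : E => ℂ) 2, ‖B f‖ ≤ ((dmax : ℝ) - 1) * ‖f‖ := by
      intro f
      have h1 : ‖B f‖ ^ 2 ≤ (((dmax : ℝ) - 1) * ‖f‖) ^ 2 := by
        rw [mul_pow, NB4.lp_norm_sq f, NB4.lp_norm_sq (B f), hinvtsum (B f)]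
        have hsf := NB4.lp_summable_sq f
        have hsBf := hinvsummable (B f)
        rw [NB4.tsum_fiber tail _ hsf, NB4.tsum_fiber tail _ hsBf, ← tsum_mul_left]
        apply Summable.tsum_le_tsum _ (NB4.summable_fiber tail _ hsBf)
          ((NB4.summable_fiber tail _ hsf).mul_left _)
        intro v
        have hbu := NB4.block_upper (hd2 v) (hdle v)
          (fun x : {e : E // tail e = v} => f x.1)
        refine le_trans (le_of_eq ?_) hbu
        apply Finset.sum_congr rfl
        intro x _
        rw [hBinv' f v x]
      exact NB4.le_of_sq_le_sq' (mul_nonneg (by linarith) (norm_nonneg _)) h1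
        (norm_nonneg _)
    refine ⟨fun f _ => ⟨hlow f, hup f⟩, ?_⟩
    -- spectrum
    have hinj : Function.Injective B := by
      intro f g hfg
      have h0 : B (f - g) = 0 := by rw [map_sub, hfg, sub_self]
      have h1 := hlow (f - g)
      rw [h0, norm_zero] at h1
      have h2 : ‖f - g‖ = 0 := le_antisymm h1 (norm_nonneg _)
      rwa [norm_eq_zero, sub_eq_zero] at h2
    have hsurj : Function.Surjective B := by
      intro g
      have hg2sum : Summable fun e => ‖g (inv e)‖ ^ 2 := hinvsummable g
      set Sg : V → ℂ := fun v => ∑ x : {e : E // tail e = v}, g (inv x.1) with hSgdef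
      set F0 : E → ℂ := fun e =>
        Sg (tail e) / ((Fintype.card {e' : E // tail e' = tail e} : ℂ) - 1) - g (inv e)
        with hF0def
      have hdne : ∀ v : V, ((Fintype.card {e : E // tail e = v} : ℂ) - 1) ≠ 0 := by
        intro v h
        have h2 := hd2 v
        have h3 : (Fintype.card {e : E // tail e = v} : ℂ) = 1 := by
          linear_combination h
        norm_cast at h3
        omega
      have hsumF0 : ∀ v : V, (∑ j : {e : E // tail e = v}, F0 j.1)
          = Sg v / ((Fintype.card {e : E // tail e = v} : ℂ) - 1) := by
        intro v
        have hstep : ∀ j : {e : E // tail e = v},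
            F0 j.1 = Sg v / ((Fintype.card {e : E // tail e = v} : ℂ) - 1)
              - g (inv j.1) := by
          rintro ⟨j, rfl⟩; rfl
        rw [Finset.sum_congr rfl (fun j _ => hstep j), Finset.sum_sub_distrib,
          Finset.sum_const, Finset.card_univ, nsmul_eq_mul]
        rw [show (∑ j : {e : E // tail e = v}, g (inv j.1)) = Sg v from rfl]
        have hc := hdne v
        rw [eq_div_iff hc, sub_mul, mul_assoc, div_mul_cancel₀ _ hc]
        ring
      have hkey : ∀ (v : V) (x : {e : E // tail e = v}),
          (∑ j : {e : E // tail e = v}, F0 j.1) - F0 x.1 = g (inv x.1) := by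
        rintro v ⟨x, rfl⟩
        rw [hsumF0]
        show _ - (Sg (tail x) / ((Fintype.card {e' : E // tail e' = tail x} : ℂ) - 1)
          - g (inv x)) = g (inv x)
        ring
      have hble : ∀ v : V,
          (∑ x : {e : E // tail e = v}, ‖F0 x.1‖ ^ 2)
          ≤ ∑ x : {e : E // tail e = v}, ‖g (inv x.1)‖ ^ 2 := by
        intro v
        refine (NB4.block_lower (hd2 v)
          (fun x : {e : E // tail e = v} => F0 x.1)).trans (le_of_eq ?_)
        apply Finset.sum_congr rfl
        intro x _
        rw [hkey v x]
      have hF0sum : Summable fun e : E => ‖F0 e‖ ^ 2 :=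
        NB4.summable_of_fiber_bound tail _ _ (fun e => sq_nonneg _) hble
          (fun e => sq_nonneg _) hg2sum
      have hF0mem : Memℓp F0 2 := by
        apply memℓp_gen
        have h2 : ∀ x : ℝ, x ^ ((2 : ℝ≥0∞).toReal) = x ^ (2 : ℕ) := fun x => by
          rw [show (2 : ℝ≥0∞).toReal = ((2 : ℕ) : ℝ) by norm_num, Real.rpow_natCast]
        simpa only [h2] using hF0sum
      refine ⟨⟨F0, hF0mem⟩, ?_⟩
      apply lp.ext
      funext e'
      have h1 := hBinv ⟨F0, hF0mem⟩ (inv e')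
      rw [hinv_inv] at h1
      have h2 := hkey (tail (inv e')) ⟨inv e', rfl⟩
      rw [hinv_inv] at h2
      show B ⟨F0, hF0mem⟩ e' = g e'
      rw [h1]
      exact h2
    have hunit : IsUnit (B : lp (fun _ : E => ℂ) 2 →L[ℂ] lp (fun _ : E => ℂ) 2) :=
      ContinuousLinearMap.isUnit_iff_bijective.mpr ⟨hinj, hsurj⟩
    obtain ⟨u, hu⟩ := hunit
    haveI : Nontrivial (lp (fun _ : E => ℂ) 2) := by
      refine ⟨lp.single 2 e₀ (1 : ℂ), 0, fun h => ?_⟩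
      have h1 : (lp.single (E := fun _ : E => ℂ) 2 e₀ (1 : ℂ)) e₀ = 1 :=
        lp.single_apply_self _ _ _
      rw [h] at h1
      simp at h1
    intro lam hlam
    have hlamne : lam ≠ 0 := by
      intro h0
      rw [h0] at hlam
      exact (spectrum.not_isUnit_of_zero_mem ℂ hlam) ⟨u, hu⟩
    constructor
    · -- lower bound on |lam|
      have hBinvnorm : ∀ g, ‖(↑u⁻¹ : lp (fun _ : E => ℂ) 2 →L[ℂ] lp (fun _ : E => ℂ) 2) g‖
          ≤ ‖g‖ := by
        intro g
        have h1 := hlow ((↑u⁻¹ : lp (fun _ : E => ℂ) 2 →L[ℂ] lp (fun _ : E => ℂ) 2) g)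
        have h2 : B ((↑u⁻¹ : lp (fun _ : E => ℂ) 2 →L[ℂ] lp (fun _ : E => ℂ) 2) g) = g := by
          conv_lhs => rw [← hu]
          rw [← ContinuousLinearMap.mul_apply, u.mul_inv, ContinuousLinearMap.one_apply]
        rwa [h2] at h1
      have hinvop : ‖(↑u⁻¹ : lp (fun _ : E => ℂ) 2 →L[ℂ] lp (fun _ : E => ℂ) 2)‖ ≤ 1 :=
        ContinuousLinearMap.opNorm_le_bound _ zero_le_one (by simpa using hBinvnorm)
      have hmem : ((Units.mk0 lam hlamne : ℂˣ) : ℂ)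
          ∈ spectrum ℂ ((u : lp (fun _ : E => ℂ) 2 →L[ℂ] lp (fun _ : E => ℂ) 2)) := by
        rw [hu]; exact hlam
      have hmem2 := spectrum.inv_mem_iff.mp hmem
      have hn := spectrum.norm_le_norm_of_mem hmem2
      have hn2 : ‖lam⁻¹‖ ≤ 1 := by
        refine le_trans ?_ hinvop
        simpa using hn
      rw [norm_inv] at hn2
      have hpos : 0 < ‖lam‖ := norm_pos_iff.mpr hlamne
      have : (1 : ℝ) ≤ ‖lam‖ := by
        rw [inv_le_one_iff₀] at hn2
        rcases hn2 with h | h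
        · linarith
        · exact h
      simpa using this
    · -- upper bound on |lam|
      have hBop : ‖B‖ ≤ (dmax : ℝ) - 1 :=
        ContinuousLinearMap.opNorm_le_bound _ (by linarith) hup
      have h := spectrum.norm_le_norm_of_mem hlam
      calc (‖lam‖ : ℝ) = ‖lam‖ := rfl
        _ ≤ ‖B‖ := h
        _ ≤ (dmax : ℝ) - 1 := hBop
end

section
/- For any bipartite graph G, the spectrum of the non-backtracking operator B is invariant under lambda -> -lambda, and also under complex conjugation; hence it is invariant under reflection in both the real and imaginary axes. -/
open scoped ENNReal

namespace BNBAux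

variable {E : Type}

local notation "H" => lp (fun _ : E => ℂ) 2

lemma two_toReal_pos : 0 < (2 : ℝ≥0∞).toReal := by norm_num

lemma mem_diag (s : E → ℂ) (hs : ∀ e, ‖s e‖ = 1) (f : H) :
    Memℓp (fun e => s e * f e) 2 := by
  apply memℓp_gen
  have h : (fun e => ‖s e * f e‖ ^ (2 : ℝ≥0∞).toReal)
      = fun e => ‖f e‖ ^ (2 : ℝ≥0∞).toReal := by
    funext e; rw [norm_mul, hs, one_mul]
  rw [h]
  exact (lp.memℓp f).summable two_toReal_pos

/-- Pointwise multiplication by a unimodular sequence, as a continuous linear map. -/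
noncomputable def diagOp (s : E → ℂ) (hs : ∀ e, ‖s e‖ = 1) : H →L[ℂ] H :=
  LinearMap.mkContinuous
    { toFun := fun f => (⟨fun e => s e * f e, mem_diag s hs f⟩ : H)
      map_add' := by
        intro f g; apply lp.ext; funext e
        simp only [lp.coeFn_add, Pi.add_apply]
        exact mul_add _ _ _
      map_smul' := by
        intro c f; apply lp.ext; funext e
        simp only [lp.coeFn_smul, Pi.smul_apply, RingHom.id_apply, smul_eq_mul]
        ring }
    1
    (by
      intro f
      rw [one_mul]
      apply le_of_eq
      rw [lp.norm_eq_tsum_rpow two_toReal_pos, lp.norm_eq_tsum_rpow two_toReal_pos f]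
      congr 1
      apply tsum_congr
      intro e
      show (‖s e * f e‖ ^ _) = _
      rw [norm_mul, hs, one_mul])

@[simp] lemma diagOp_apply (s : E → ℂ) (hs : ∀ e, ‖s e‖ = 1) (f : H) (e : E) :
    diagOp s hs f e = s e * f e := rfl

/-- Conjugation of an operator by the pointwise complex conjugation. -/
noncomputable def conjOp (T : H →L[ℂ] H) : H →L[ℂ] H :=
  { toFun := fun x => star (T (star x))
    map_add' := by
      intro x y
      show star (T (star (x + y))) = star (T (star x)) + star (T (star y))
      rw [star_add, map_add, star_add]
    map_smul' := by
      intro c x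
      show star (T (star (c • x))) = (RingHom.id ℂ) c • star (T (star x))
      rw [star_smul, map_smul, star_smul, star_star, RingHom.id_apply]
    cont := continuous_star.comp (T.continuous.comp continuous_star) }

@[simp] lemma conjOp_apply (T : H →L[ℂ] H) (x : H) :
    conjOp T x = star (T (star x)) := rfl

/-- `conjOp` as a ring homomorphism on the algebra of operators. -/
noncomputable def conjRingHom : (H →L[ℂ] H) →+* (H →L[ℂ] H) where
  toFun := conjOp
  map_one' := by
    ext x
    simp [conjOp_apply, ContinuousLinearMap.one_apply]
  map_mul' := by
    intro T S
    ext x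
    simp [conjOp_apply, ContinuousLinearMap.mul_apply]
  map_zero' := by
    ext x
    simp [conjOp_apply]
  map_add' := by
    intro T S
    ext x
    simp [conjOp_apply, ContinuousLinearMap.add_apply, star_add]

lemma conjRingHom_algebraMap (μ : ℂ) :
    conjRingHom (algebraMap ℂ (H →L[ℂ] H) μ) =
      algebraMap ℂ (H →L[ℂ] H) ((starRingEnd ℂ) μ) := by
  ext x
  simp only [conjRingHom, RingHom.coe_mk, MonoidHom.coe_mk, OneHom.coe_mk, conjOp_apply,
    Algebra.algebraMap_eq_smul_one, ContinuousLinearMap.smul_apply,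
    ContinuousLinearMap.one_apply]
  rw [star_smul, star_star, starRingEnd_apply]

end BNBAux

/-- For a bipartite graph, the spectrum of the non-backtracking operator `B`
is invariant under `λ ↦ -λ` and under complex conjugation; hence it is invariant under
reflection in both the real and the imaginary axes. -/
theorem bipartite_nonbacktracking_spectrum_fourfold_symmetry
    {V E : Type} (tail head : E → V) (inv : E → E)
    (hinv_inv : ∀ e, inv (inv e) = e)
    (hinv_ne : ∀ e, inv e ≠ e)
    (htail_inv : ∀ e, tail (inv e) = head e)
    (follows : E → E → Prop)
    (hfollows : ∀ e e', follows e e' ↔ head e = tail e' ∧ e' ≠ inv e)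
    (dmax : ℕ)
    (hdeg : ∀ v : V, 2 ≤ Nat.card {e : E // tail e = v} ∧
      Nat.card {e : E // tail e = v} ≤ dmax)
    -- bipartition: `side` alternates along every edge
    (side : V → Bool)
    (hbip : ∀ e : E, side (head e) = ! side (tail e))
    (B : lp (fun _ : E => ℂ) 2 →L[ℂ] lp (fun _ : E => ℂ) 2)
    (hB : ∀ f e, B f e = ∑' e' : {e' : E // follows e e'}, f e') :
    ∀ lam : ℂ, (lam ∈ spectrum ℂ B ↔ -lam ∈ spectrum ℂ B) ∧
      (lam ∈ spectrum ℂ B ↔ (starRingEnd ℂ) lam ∈ spectrum ℂ B) := by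
  classical
  -- the sign sequence of the bipartition
  set s : E → ℂ := fun e => if side (tail e) then (-1 : ℂ) else 1 with hs_def
  have hs : ∀ e, ‖s e‖ = 1 := by
    intro e; by_cases h : side (tail e) <;> simp [hs_def, h]
  set N : lp (fun _ : E => ℂ) 2 →L[ℂ] lp (fun _ : E => ℂ) 2 := BNBAux.diagOp s hs with hN_def
  have hNapp : ∀ (f : lp (fun _ : E => ℂ) 2) (e : E), N f e = s e * f e := fun f e => rfl
  -- N is an involution
  have hNN : N * N = 1 := by
    refine ContinuousLinearMap.ext fun f => ?_
    apply lp.ext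
    funext e
    show N (N f) e = f e
    rw [hNapp, hNapp]
    by_cases h : side (tail e) <;> simp [hs_def, h]
  -- the sign flips along `follows`
  have hsign : ∀ e e', follows e e' → s e * s e' = -1 := by
    intro e e' h
    have h1 : head e = tail e' := ((hfollows e e').1 h).1
    have h2 : side (tail e') = ! side (tail e) := by rw [← h1, hbip]
    by_cases hb : side (tail e) <;> simp [hs_def, hb, h2]
  -- conjugation by N negates B
  have hconj : N * B * N = -B := by
    refine ContinuousLinearMap.ext fun f => ?_
    apply lp.ext
    funext e
    show N (B (N f)) e = (-B) f e
    rw [hNapp]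
    rw [hB (N f) e]
    have h1 : (∑' e' : {e' : E // follows e e'}, (N f) (e' : E))
        = ∑' e' : {e' : E // follows e e'}, s (e' : E) * f (e' : E) := by
      apply tsum_congr; intro e'; rw [hNapp]
    rw [h1, ← tsum_mul_left]
    have h2 : (fun e' : {e' : E // follows e e'} => s e * (s (e' : E) * f (e' : E)))
        = fun e' : {e' : E // follows e e'} => -(f (e' : E)) := by
      funext e'
      rw [← mul_assoc, hsign e e' e'.2, neg_one_mul]
    rw [h2, tsum_neg]
    have h3 : (-B) f e = -(B f e) := by
      rw [ContinuousLinearMap.neg_apply, lp.coeFn_neg, Pi.neg_apply]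
    rw [h3, hB f e]
  -- spectrum of -B equals spectrum of B
  have hspecneg : spectrum ℂ (-B) = spectrum ℂ B := by
    have hu := spectrum.units_conjugate (R := ℂ) (a := B)
      (u := ⟨N, N, hNN, hNN⟩)
    rw [show ((⟨N, N, hNN, hNN⟩ : (lp (fun _ : E => ℂ) 2 →L[ℂ] lp (fun _ : E => ℂ) 2)ˣ)⁻¹ : _ˣ).val
      = N from rfl] at hu
    rw [← hu, hconj]
  -- B commutes with conjugation
  have hBstar : BNBAux.conjRingHom B = B := by
    refine ContinuousLinearMap.ext fun f => ?_
    apply lp.ext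
    funext e
    show star (B (star f) e) = B f e
    rw [hB (star f) e, hB f e]
    have h1 : (∑' e' : {e' : E // follows e e'}, (star f : lp (fun _ : E => ℂ) 2) (e' : E))
        = ∑' e' : {e' : E // follows e e'}, star (f (e' : E)) := by
      apply tsum_congr; intro e'; rfl
    rw [h1, ← tsum_star, star_star]
  -- unit transfer under conjugation
  have key : ∀ μ : ℂ, IsUnit (algebraMap ℂ _ μ - B) →
      IsUnit (algebraMap ℂ _ ((starRingEnd ℂ) μ) - B) := by
    intro μ h
    have h2 := h.map BNBAux.conjRingHom
    rwa [map_sub, BNBAux.conjRingHom_algebraMap, hBstar] at h2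
  intro lam
  constructor
  · constructor
    · intro h
      rw [← hspecneg, ← spectrum.neg_eq, Set.mem_neg, neg_neg]
      exact h
    · intro h
      rw [← hspecneg, ← spectrum.neg_eq, Set.mem_neg] at h
      rwa [neg_neg] at h
  · rw [spectrum.mem_iff, spectrum.mem_iff]
    constructor
    · intro h hu
      exact h (by
        have := key ((starRingEnd ℂ) lam) hu
        rwa [Complex.conj_conj] at this)
    · intro h hu
      exact h (key lam hu)
end

section
/- Let G be a graph with bounded degrees d_max, minimal degree at least 2, and let lambda in C with lambda ≠ ±1. If Q_lambda is not invertible then B - lambda*I is not invertible. Concretely: given f on vertices with ||f|| = 1 and ||Q_lambda f|| < epsilon, the 1-form g defined by g(u,v) = f(u) - lambda f(v) satisfies ((B - lambda I)g)(u,v) = (Q_lambda f)(v), hence ||(B - lambda I)g||^2 <= d_max * epsilon^2, while ||g||^2 >= c(lambda) > 0 where c(lambda) depends only on lambda ≠ ±1. -/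
open scoped ENNReal NNReal ComplexConjugate

lemma tsum_fiber_ennreal {V E : Type} (tail : E → V) [∀ v, Finite {e : E // tail e = v}]
    (h : V → ℝ≥0∞) :
    ∑' e : E, h (tail e) = ∑' v : V, (Nat.card {e : E // tail e = v} : ℝ≥0∞) * h v := by
  rw [← (Equiv.sigmaFiberEquiv tail).tsum_eq (fun e => h (tail e))]
  rw [ENNReal.tsum_sigma' (fun c => h (tail ((Equiv.sigmaFiberEquiv tail) c)))]
  refine tsum_congr fun v => ?_
  classical
  have hfty := Fintype.ofFinite {e : E // tail e = v}
  have h1 : ∀ x : {e : E // tail e = v},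
      h (tail ((Equiv.sigmaFiberEquiv tail) ⟨v, x⟩)) = h v := fun x => by
    simp [x.2]
  rw [tsum_congr h1, tsum_fintype]
  simp [Finset.sum_const, Nat.card_eq_fintype_card, nsmul_eq_mul]

lemma tsum_inv_ennreal {E : Type} (inv : E → E) (hinv : ∀ e, inv (inv e) = e)
    (k : E → ℝ≥0∞) : ∑' e : E, k (inv e) = ∑' e : E, k e :=
  (Function.Involutive.toPerm inv hinv).tsum_eq k

lemma tsum_inv_comm {E : Type} {M : Type*} [AddCommMonoid M] [TopologicalSpace M]
    (inv : E → E) (hinv : ∀ e, inv (inv e) = e)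
    (k : E → M) : ∑' e : E, k (inv e) = ∑' e : E, k e :=
  (Function.Involutive.toPerm inv hinv).tsum_eq k

lemma lp_nnnorm_sq_eq {ι : Type} (f : lp (fun _ : ι => ℂ) 2) :
    (‖f‖₊ : ℝ≥0∞) ^ 2 = ∑' i, (‖f i‖₊ : ℝ≥0∞) ^ 2 := by
  have hs : HasSum (fun i => ‖f i‖ ^ (2 : ℝ)) (‖f‖ ^ (2 : ℝ)) := by
    simpa using lp.hasSum_norm (p := 2) (by norm_num) f
  have hs2 : HasSum (fun i => ‖f i‖ ^ (2 : ℕ)) (‖f‖ ^ (2 : ℕ)) := by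
    rw [show (2 : ℝ) = ((2 : ℕ) : ℝ) by norm_num] at hs
    simpa [Real.rpow_natCast] using hs
  have hs' : HasSum (fun i => (‖f i‖₊ ^ 2 : ℝ≥0)) (‖f‖₊ ^ 2) := by
    rw [← NNReal.hasSum_coe]
    push_cast
    exact hs2
  have h3 : ((‖f‖₊ ^ 2 : ℝ≥0) : ℝ≥0∞) = ∑' i, ((‖f i‖₊ ^ 2 : ℝ≥0) : ℝ≥0∞) := by
    rw [← hs'.tsum_eq, ENNReal.coe_tsum hs'.summable]
  simpa [ENNReal.coe_pow] using h3

lemma memℓp_of_ennreal {ι : Type} (q : ι → ℂ) (h : ∑' i, (‖q i‖₊ : ℝ≥0∞) ^ 2 ≠ ⊤) :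
    Memℓp q 2 := by
  apply memℓp_gen
  have h2 := ENNReal.summable_toReal h
  have h3 : ∀ i, ((‖q i‖₊ : ℝ≥0∞) ^ 2).toReal = ‖q i‖ ^ ((2:ℝ≥0∞).toReal) := by
    intro i
    rw [ENNReal.toReal_pow, show ((2:ℝ≥0∞).toReal) = ((2 : ℕ) : ℝ) by norm_num,
      Real.rpow_natCast]
    simp
  simpa [h3] using h2

lemma ennreal_add_sq_le (x y : ℝ≥0∞) : (x + y) ^ 2 ≤ 4 * (x ^ 2 + y ^ 2) := by
  have h1 : x + y ≤ 2 * (x ⊔ y) := by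
    rw [two_mul]; exact add_le_add le_sup_left le_sup_right
  calc (x + y) ^ 2 ≤ (2 * (x ⊔ y)) ^ 2 := pow_le_pow_left₀ zero_le h1 2
    _ = 4 * (x ⊔ y) ^ 2 := by ring
    _ ≤ 4 * (x ^ 2 + y ^ 2) := by
        have : (x ⊔ y) ^ 2 ≤ x ^ 2 + y ^ 2 := by
          rcases le_total x y with h | h
          · rw [sup_eq_right.mpr h]; exact le_add_self
          · rw [sup_eq_left.mpr h]; exact le_self_add
        exact mul_le_mul_right this 4

lemma nnreal_le_of_sq_le {x y c : ℝ≥0} (h : (x : ℝ≥0∞) ^ 2 ≤ (c : ℝ≥0∞) ^ 2 * (y : ℝ≥0∞) ^ 2) :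
    x ≤ c * y := by
  have h2 : x ^ 2 ≤ (c * y) ^ 2 := by
    have : (x : ℝ≥0∞) ^ 2 ≤ ((c * y : ℝ≥0) : ℝ≥0∞) ^ 2 := by push_cast; rw [mul_pow]; exact h
    exact_mod_cast this
  by_contra h3
  push_neg at h3
  exact absurd h2 (not_le.mpr (pow_lt_pow_left₀ h3 zero_le two_ne_zero))

lemma tsum_fiber_complex {V E : Type} (tail : E → V) [∀ v, Finite {e : E // tail e = v}]
    (F : E → ℂ) (hF : Summable F) :
    ∑' e : E, F e = ∑' v : V, ∑' x : {e : E // tail e = v}, F x.1 := by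
  rw [← (Equiv.sigmaFiberEquiv tail).tsum_eq F]
  exact Summable.tsum_sigma ((Equiv.sigmaFiberEquiv tail).summable_iff.mpr hF)
set_option maxHeartbeats 1600000 in
/-- For a graph with degrees bounded by `dmax`, minimal degree at least 2,
and `λ ≠ ±1`: if `Q_λ = Q - λA + λ²I` is not invertible, then `B - λI` is not
invertible. -/
theorem B_not_invertible_of_Qlambda_not_invertible
    {V E : Type} (tail head : E → V) (inv : E → E)
    (hinv_inv : ∀ e, inv (inv e) = e)
    (hinv_ne : ∀ e, inv e ≠ e)
    (htail_inv : ∀ e, tail (inv e) = head e)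
    (follows : E → E → Prop)
    (hfollows : ∀ e e', follows e e' ↔ head e = tail e' ∧ e' ≠ inv e)
    (dmax : ℕ)
    (hdeg : ∀ v : V, 2 ≤ Nat.card {e : E // tail e = v} ∧
      Nat.card {e : E // tail e = v} ≤ dmax)
    (B : lp (fun _ : E => ℂ) 2 →L[ℂ] lp (fun _ : E => ℂ) 2)
    (hB : ∀ f e, B f e = ∑' e' : {e' : E // follows e e'}, f e')
    (A Q : lp (fun _ : V => ℂ) 2 →L[ℂ] lp (fun _ : V => ℂ) 2)
    (hA : ∀ f v, A f v = ∑' e : {e : E // tail e = v}, f (head e))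
    (hQ : ∀ f v, Q f v = ((Nat.card {e : E // tail e = v} : ℂ) - 1) * f v)
    (lam : ℂ) (hlam1 : lam ≠ 1) (hlam2 : lam ≠ -1)
    (hQlam : ¬ IsUnit (Q - lam • A + lam ^ 2 • (1 : lp (fun _ : V => ℂ) 2 →L[ℂ]
        lp (fun _ : V => ℂ) 2))) :
    ¬ IsUnit (B - lam • (1 : lp (fun _ : E => ℂ) 2 →L[ℂ] lp (fun _ : E => ℂ) 2)) := by
  classical
  intro hBunit
  haveI hfin : ∀ v : V, Finite {e : E // tail e = v} := by
    intro v
    have h1 := (hdeg v).1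
    have h2 : 0 < Nat.card {e : E // tail e = v} := by omega
    exact (Nat.card_pos_iff.mp h2).2
  set D : V → ℕ := fun v => Nat.card {e : E // tail e = v} with hD
  have head_inv : ∀ e, head (inv e) = tail e := by
    intro e
    have h := htail_inv (inv e)
    rw [hinv_inv] at h
    exact h.symm
  set Qlam : lp (fun _ : V => ℂ) 2 →L[ℂ] lp (fun _ : V => ℂ) 2 :=
    Q - lam • A + lam ^ 2 • (1 : lp (fun _ : V => ℂ) 2 →L[ℂ] lp (fun _ : V => ℂ) 2)
    with hQlamdef
  -- pointwise formula
  have hQlam_apply : ∀ (f : lp (fun _ : V => ℂ) 2) (v : V),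
      Qlam f v = ((D v : ℂ) - 1) * f v
        - lam * (∑' e : {e : E // tail e = v}, f (head e)) + lam ^ 2 * f v := by
    intro f v
    have h1 : Qlam f = Q f - lam • A f + lam ^ 2 • f := by
      rw [hQlamdef]
      simp [ContinuousLinearMap.add_apply, ContinuousLinearMap.sub_apply,
        ContinuousLinearMap.smul_apply]
    rw [h1]
    rw [lp.coeFn_add, lp.coeFn_sub, lp.coeFn_smul]
    simp only [Pi.add_apply, Pi.sub_apply, Pi.smul_apply, smul_eq_mul]
    rw [hQ, hA]
    simp [hD]
  -- inverse bound for B - lam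
  obtain ⟨u, hu⟩ := hBunit
  set N : ℝ≥0 :=
    ‖(↑u⁻¹ : lp (fun _ : E => ℂ) 2 →L[ℂ] lp (fun _ : E => ℂ) 2)‖₊ with hN
  have hNbound : ∀ x : lp (fun _ : E => ℂ) 2,
      ‖x‖₊ ≤ N * ‖(B - lam • (1 : lp (fun _ : E => ℂ) 2 →L[ℂ] lp (fun _ : E => ℂ) 2)) x‖₊ := by
    intro x
    have h1 : (↑u⁻¹ : lp (fun _ : E => ℂ) 2 →L[ℂ] lp (fun _ : E => ℂ) 2)
        ((B - lam • (1 : lp (fun _ : E => ℂ) 2 →L[ℂ] lp (fun _ : E => ℂ) 2)) x) = x := by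
      calc (↑u⁻¹ : lp (fun _ : E => ℂ) 2 →L[ℂ] lp (fun _ : E => ℂ) 2)
            ((B - lam • (1 : lp (fun _ : E => ℂ) 2 →L[ℂ] lp (fun _ : E => ℂ) 2)) x)
          = ((↑u⁻¹ * ↑u : lp (fun _ : E => ℂ) 2 →L[ℂ] lp (fun _ : E => ℂ) 2)) x := by
            rw [hu]; rfl
        _ = x := by rw [u.inv_mul]; rfl
    conv_lhs => rw [← h1]
    exact ContinuousLinearMap.le_opNNNorm _ _
  set L : ℝ≥0 := ‖lam‖₊ with hL
  set μ : ℝ≥0 := ‖1 - lam ^ 2‖₊ with hμ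
  have hμne : μ ≠ 0 := by
    rw [hμ]
    simp only [ne_eq, nnnorm_eq_zero]
    intro h
    have h2 : (1 - lam) * (1 + lam) = 0 := by rw [← h]; ring
    rcases mul_eq_zero.mp h2 with h3 | h3
    · exact hlam1 (by linear_combination -h3)
    · exact hlam2 (by linear_combination h3)
  -- ENNReal sum infrastructure
  have Stail : ∀ h : V → ℝ≥0∞, ∑' e : E, h (tail e) = ∑' v : V, (D v : ℝ≥0∞) * h v :=
    fun h => tsum_fiber_ennreal tail h
  have Sinv : ∀ k : E → ℝ≥0∞, ∑' e : E, k (inv e) = ∑' e : E, k e :=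
    fun k => tsum_inv_ennreal inv hinv_inv k
  have Shead : ∀ h : V → ℝ≥0∞, ∑' e : E, h (head e) = ∑' v : V, (D v : ℝ≥0∞) * h v := by
    intro h
    rw [← Sinv (fun e => h (head e))]
    simp only [head_inv]
    exact Stail h
  have hDle : ∀ v : V, (D v : ℝ≥0∞) ≤ (dmax : ℝ≥0∞) := by
    intro v; exact_mod_cast Nat.cast_le.mpr (hdeg v).2
  -- the key bounded-below estimate
  have hbb : ∀ f : lp (fun _ : V => ℂ) 2,
      (μ : ℝ≥0∞) ^ 2 * (‖f‖₊ : ℝ≥0∞) ^ 2 ≤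
        4 * (1 + (L : ℝ≥0∞) ^ 2) * (N : ℝ≥0∞) ^ 2 * (dmax : ℝ≥0∞) *
          (‖Qlam f‖₊ : ℝ≥0∞) ^ 2 := by
    intro f
    set gf : E → ℂ := fun e => f (tail e) - lam * f (head e) with hgf
    have hgf_sq : ∀ e : E, (‖gf e‖₊ : ℝ≥0∞) ^ 2 ≤
        4 * ((‖f (tail e)‖₊ : ℝ≥0∞) ^ 2 + (L : ℝ≥0∞) ^ 2 * (‖f (head e)‖₊ : ℝ≥0∞) ^ 2) := by
      intro e
      have h1 : ‖gf e‖₊ ≤ ‖f (tail e)‖₊ + L * ‖f (head e)‖₊ := by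
        calc ‖gf e‖₊ ≤ ‖f (tail e)‖₊ + ‖lam * f (head e)‖₊ := nnnorm_sub_le _ _
          _ = ‖f (tail e)‖₊ + L * ‖f (head e)‖₊ := by rw [nnnorm_mul, hL]
      calc (‖gf e‖₊ : ℝ≥0∞) ^ 2
          ≤ ((‖f (tail e)‖₊ + L * ‖f (head e)‖₊ : ℝ≥0) : ℝ≥0∞) ^ 2 :=
            pow_le_pow_left₀ zero_le (ENNReal.coe_le_coe.mpr h1) 2
        _ = ((‖f (tail e)‖₊ : ℝ≥0∞) + (L : ℝ≥0∞) * (‖f (head e)‖₊ : ℝ≥0∞)) ^ 2 := by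
            push_cast; ring
        _ ≤ 4 * ((‖f (tail e)‖₊ : ℝ≥0∞) ^ 2 + ((L : ℝ≥0∞) * (‖f (head e)‖₊ : ℝ≥0∞)) ^ 2) :=
            ennreal_add_sq_le _ _
        _ = 4 * ((‖f (tail e)‖₊ : ℝ≥0∞) ^ 2 + (L : ℝ≥0∞) ^ 2 * (‖f (head e)‖₊ : ℝ≥0∞) ^ 2) := by
            ring
    have htailS : ∑' e : E, (‖f (tail e)‖₊ : ℝ≥0∞) ^ 2 ≤
        (dmax : ℝ≥0∞) * (‖f‖₊ : ℝ≥0∞) ^ 2 := by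
      rw [Stail (fun v => (‖f v‖₊ : ℝ≥0∞) ^ 2), lp_nnnorm_sq_eq f, ← ENNReal.tsum_mul_left]
      exact Summable.tsum_le_tsum (fun v => mul_le_mul_left (hDle v) _)
        ENNReal.summable ENNReal.summable
    have hheadS : ∑' e : E, (‖f (head e)‖₊ : ℝ≥0∞) ^ 2 ≤
        (dmax : ℝ≥0∞) * (‖f‖₊ : ℝ≥0∞) ^ 2 := by
      rw [Shead (fun v => (‖f v‖₊ : ℝ≥0∞) ^ 2), lp_nnnorm_sq_eq f, ← ENNReal.tsum_mul_left]
      exact Summable.tsum_le_tsum (fun v => mul_le_mul_left (hDle v) _)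
        ENNReal.summable ENNReal.summable
    have hgf_sum : ∑' e : E, (‖gf e‖₊ : ℝ≥0∞) ^ 2 ≤
        4 * (1 + (L : ℝ≥0∞) ^ 2) * ((dmax : ℝ≥0∞) * (‖f‖₊ : ℝ≥0∞) ^ 2) := by
      calc ∑' e : E, (‖gf e‖₊ : ℝ≥0∞) ^ 2
          ≤ ∑' e : E, 4 * ((‖f (tail e)‖₊ : ℝ≥0∞) ^ 2 +
              (L : ℝ≥0∞) ^ 2 * (‖f (head e)‖₊ : ℝ≥0∞) ^ 2) :=
            Summable.tsum_le_tsum hgf_sq ENNReal.summable ENNReal.summable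
        _ = 4 * ((∑' e : E, (‖f (tail e)‖₊ : ℝ≥0∞) ^ 2) +
              (L : ℝ≥0∞) ^ 2 * ∑' e : E, (‖f (head e)‖₊ : ℝ≥0∞) ^ 2) := by
            rw [ENNReal.tsum_mul_left, ENNReal.tsum_add, ENNReal.tsum_mul_left]
        _ ≤ 4 * ((dmax : ℝ≥0∞) * (‖f‖₊ : ℝ≥0∞) ^ 2 +
              (L : ℝ≥0∞) ^ 2 * ((dmax : ℝ≥0∞) * (‖f‖₊ : ℝ≥0∞) ^ 2)) := by
            gcongr
        _ = 4 * (1 + (L : ℝ≥0∞) ^ 2) * ((dmax : ℝ≥0∞) * (‖f‖₊ : ℝ≥0∞) ^ 2) := by ring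
    have hgmem : Memℓp gf 2 := by
      apply memℓp_of_ennreal
      apply ne_top_of_le_ne_top _ hgf_sum
      have h4 : 4 * (1 + (L : ℝ≥0∞) ^ 2) * ((dmax : ℝ≥0∞) * (‖f‖₊ : ℝ≥0∞) ^ 2) =
          ((4 * (1 + L ^ 2) * (dmax * ‖f‖₊ ^ 2) : ℝ≥0) : ℝ≥0∞) := by push_cast; ring
      rw [h4]
      exact ENNReal.coe_ne_top
    set g : lp (fun _ : E => ℂ) 2 := ⟨gf, hgmem⟩ with hg
    have hg_apply : ∀ e : E, g e = f (tail e) - lam * f (head e) := fun e => rfl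
    have hBg : ∀ e : E,
        ((B - lam • (1 : lp (fun _ : E => ℂ) 2 →L[ℂ] lp (fun _ : E => ℂ) 2)) g) e =
          Qlam f (head e) := by
      intro e
      letI hfty : Fintype {e' : E // tail e' = head e} := Fintype.ofFinite _
      set a : {e' : E // tail e' = head e} := ⟨inv e, htail_inv e⟩ with ha
      let φ : {e' : E // follows e e'} ≃ {x : {e' : E // tail e' = head e} // x ≠ a} :=
        { toFun := fun p => ⟨⟨p.1, (((hfollows e p.1).mp p.2).1).symm⟩, by
            intro hx
            exact (((hfollows e p.1).mp p.2).2) (by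
              have h5 := congrArg (fun q => Subtype.val q) hx
              simpa [ha] using h5)⟩
          invFun := fun x => ⟨x.1.1, (hfollows e x.1.1).mpr ⟨x.1.2.symm, by
            intro hx
            exact x.2 (Subtype.ext hx)⟩⟩
          left_inv := fun p => rfl
          right_inv := fun x => rfl }
      have e1 : (∑' (e' : {e' : E // follows e e'}), g e'.1) =
          ∑' (x : {x : {e' : E // tail e' = head e} // x ≠ a}), g x.1.1 :=
        Equiv.tsum_eq φ (fun x => g x.1.1)
      have e2 : (∑' (x : {x : {e' : E // tail e' = head e} // x ≠ a}), g x.1.1) =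
          ∑ x ∈ Finset.univ.erase a, g x.1 := by
        rw [tsum_fintype]
        exact (Finset.sum_subtype _ (by simp) (fun x : {e' : E // tail e' = head e} => g x.1)).symm
      have e3 : (∑ x ∈ Finset.univ.erase a, g x.1) =
          (∑ x : {e' : E // tail e' = head e}, g x.1) - g (inv e) := by
        have h6 := Finset.sum_erase_add Finset.univ
          (fun x : {e' : E // tail e' = head e} => g x.1) (Finset.mem_univ a)
        exact eq_sub_of_add_eq h6
      have hsum1 : B g e = (∑ x : {e' : E // tail e' = head e}, g x.1) - g (inv e) :=
        (hB g e).trans (e1.trans (e2.trans e3))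
      have hsub : ((B - lam • (1 : lp (fun _ : E => ℂ) 2 →L[ℂ] lp (fun _ : E => ℂ) 2)) g) e =
          B g e - lam * g e := by
        rw [ContinuousLinearMap.sub_apply, ContinuousLinearMap.smul_apply,
          ContinuousLinearMap.one_apply]
        rw [lp.coeFn_sub, lp.coeFn_smul]
        simp [Pi.sub_apply, Pi.smul_apply, smul_eq_mul]
      rw [hsub, hsum1, hQlam_apply]
      have hAfin : (∑' x : {e' : E // tail e' = head e}, f (head x.1)) =
          ∑ x : {e' : E // tail e' = head e}, f (head x.1) := tsum_fintype _
      rw [hAfin]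
      have hsplit : (∑ x : {e' : E // tail e' = head e}, g x.1) =
          (D (head e) : ℂ) * f (head e)
            - lam * ∑ x : {e' : E // tail e' = head e}, f (head x.1) := by
        have h7 : ∀ x : {e' : E // tail e' = head e},
            g x.1 = f (head e) - lam * f (head x.1) := by
          intro x
          rw [hg_apply, x.2]
        rw [Finset.sum_congr rfl (fun x _ => h7 x)]
        rw [Finset.sum_sub_distrib, Finset.sum_const, ← Finset.mul_sum]
        simp only [Finset.card_univ, hD, Nat.card_eq_fintype_card, nsmul_eq_mul]
      rw [hsplit, hg_apply, hg_apply, htail_inv, head_inv]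
      ring
    have h1 : (‖(B - lam • (1 : lp (fun _ : E => ℂ) 2 →L[ℂ] lp (fun _ : E => ℂ) 2)) g‖₊ :
        ℝ≥0∞) ^ 2 ≤ (dmax : ℝ≥0∞) * (‖Qlam f‖₊ : ℝ≥0∞) ^ 2 := by
      rw [lp_nnnorm_sq_eq]
      calc ∑' e : E, (‖((B - lam • (1 : lp (fun _ : E => ℂ) 2 →L[ℂ]
              lp (fun _ : E => ℂ) 2)) g) e‖₊ : ℝ≥0∞) ^ 2
          = ∑' e : E, (‖Qlam f (head e)‖₊ : ℝ≥0∞) ^ 2 :=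
            tsum_congr fun e => by rw [hBg e]
        _ = ∑' v : V, (D v : ℝ≥0∞) * (‖Qlam f v‖₊ : ℝ≥0∞) ^ 2 :=
            Shead (fun v => (‖Qlam f v‖₊ : ℝ≥0∞) ^ 2)
        _ ≤ ∑' v : V, (dmax : ℝ≥0∞) * (‖Qlam f v‖₊ : ℝ≥0∞) ^ 2 :=
            Summable.tsum_le_tsum (fun v => mul_le_mul_left (hDle v) _)
              ENNReal.summable ENNReal.summable
        _ = (dmax : ℝ≥0∞) * (‖Qlam f‖₊ : ℝ≥0∞) ^ 2 := by
            rw [ENNReal.tsum_mul_left, lp_nnnorm_sq_eq (Qlam f)]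
    have hfe : ∀ e : E, (μ : ℝ≥0∞) ^ 2 * (‖f (tail e)‖₊ : ℝ≥0∞) ^ 2 ≤
        4 * ((‖g e‖₊ : ℝ≥0∞) ^ 2 + (L : ℝ≥0∞) ^ 2 * (‖g (inv e)‖₊ : ℝ≥0∞) ^ 2) := by
      intro e
      have hge : g e + lam * g (inv e) = (1 - lam ^ 2) * f (tail e) := by
        rw [hg_apply, hg_apply, htail_inv, head_inv]
        ring
      have hx1 : μ * ‖f (tail e)‖₊ = ‖g e + lam * g (inv e)‖₊ := by
        rw [hge, nnnorm_mul, hμ]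
      have hx2 : ‖g e + lam * g (inv e)‖₊ ≤ ‖g e‖₊ + L * ‖g (inv e)‖₊ :=
        (nnnorm_add_le _ _).trans (by rw [nnnorm_mul, hL])
      calc (μ : ℝ≥0∞) ^ 2 * (‖f (tail e)‖₊ : ℝ≥0∞) ^ 2
          = ((μ * ‖f (tail e)‖₊ : ℝ≥0) : ℝ≥0∞) ^ 2 := by push_cast; ring
        _ ≤ ((‖g e‖₊ + L * ‖g (inv e)‖₊ : ℝ≥0) : ℝ≥0∞) ^ 2 :=
            pow_le_pow_left₀ zero_le (ENNReal.coe_le_coe.mpr (hx1 ▸ hx2)) 2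
        _ = ((‖g e‖₊ : ℝ≥0∞) + (L : ℝ≥0∞) * (‖g (inv e)‖₊ : ℝ≥0∞)) ^ 2 := by
            push_cast; ring
        _ ≤ 4 * ((‖g e‖₊ : ℝ≥0∞) ^ 2 + ((L : ℝ≥0∞) * (‖g (inv e)‖₊ : ℝ≥0∞)) ^ 2) :=
            ennreal_add_sq_le _ _
        _ = 4 * ((‖g e‖₊ : ℝ≥0∞) ^ 2 + (L : ℝ≥0∞) ^ 2 * (‖g (inv e)‖₊ : ℝ≥0∞) ^ 2) := by
            ring
    have h2 : (μ : ℝ≥0∞) ^ 2 * (‖f‖₊ : ℝ≥0∞) ^ 2 ≤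
        4 * (1 + (L : ℝ≥0∞) ^ 2) * (‖g‖₊ : ℝ≥0∞) ^ 2 := by
      calc (μ : ℝ≥0∞) ^ 2 * (‖f‖₊ : ℝ≥0∞) ^ 2
          = (μ : ℝ≥0∞) ^ 2 * ∑' v : V, (‖f v‖₊ : ℝ≥0∞) ^ 2 := by rw [lp_nnnorm_sq_eq f]
        _ ≤ (μ : ℝ≥0∞) ^ 2 * ∑' v : V, (D v : ℝ≥0∞) * (‖f v‖₊ : ℝ≥0∞) ^ 2 := by
            refine mul_le_mul_right (Summable.tsum_le_tsum (fun v => ?_)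
              ENNReal.summable ENNReal.summable) _
            refine le_mul_of_one_le_left zero_le ?_
            have h9 := (hdeg v).1
            have h10 : 1 ≤ D v := by simp only [hD]; omega
            exact_mod_cast h10
        _ = (μ : ℝ≥0∞) ^ 2 * ∑' e : E, (‖f (tail e)‖₊ : ℝ≥0∞) ^ 2 := by
            rw [Stail (fun v => (‖f v‖₊ : ℝ≥0∞) ^ 2)]
        _ = ∑' e : E, (μ : ℝ≥0∞) ^ 2 * (‖f (tail e)‖₊ : ℝ≥0∞) ^ 2 :=
            (ENNReal.tsum_mul_left).symm
        _ ≤ ∑' e : E, 4 * ((‖g e‖₊ : ℝ≥0∞) ^ 2 +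
              (L : ℝ≥0∞) ^ 2 * (‖g (inv e)‖₊ : ℝ≥0∞) ^ 2) :=
            Summable.tsum_le_tsum hfe ENNReal.summable ENNReal.summable
        _ = 4 * ((∑' e : E, (‖g e‖₊ : ℝ≥0∞) ^ 2) +
              (L : ℝ≥0∞) ^ 2 * ∑' e : E, (‖g (inv e)‖₊ : ℝ≥0∞) ^ 2) := by
            rw [ENNReal.tsum_mul_left, ENNReal.tsum_add, ENNReal.tsum_mul_left]
        _ = 4 * (1 + (L : ℝ≥0∞) ^ 2) * (‖g‖₊ : ℝ≥0∞) ^ 2 := by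
            rw [Sinv (fun e => (‖g e‖₊ : ℝ≥0∞) ^ 2), ← lp_nnnorm_sq_eq g]
            ring
    have h3 : (‖g‖₊ : ℝ≥0∞) ^ 2 ≤ (N : ℝ≥0∞) ^ 2 *
        (‖(B - lam • (1 : lp (fun _ : E => ℂ) 2 →L[ℂ] lp (fun _ : E => ℂ) 2)) g‖₊ :
          ℝ≥0∞) ^ 2 := by
      rw [← mul_pow]
      refine pow_le_pow_left₀ zero_le ?_ 2
      have h9 := hNbound g
      exact_mod_cast h9
    calc (μ : ℝ≥0∞) ^ 2 * (‖f‖₊ : ℝ≥0∞) ^ 2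
        ≤ 4 * (1 + (L : ℝ≥0∞) ^ 2) * (‖g‖₊ : ℝ≥0∞) ^ 2 := h2
      _ ≤ 4 * (1 + (L : ℝ≥0∞) ^ 2) * ((N : ℝ≥0∞) ^ 2 *
            (‖(B - lam • (1 : lp (fun _ : E => ℂ) 2 →L[ℂ]
              lp (fun _ : E => ℂ) 2)) g‖₊ : ℝ≥0∞) ^ 2) := mul_le_mul_right h3 _
      _ ≤ 4 * (1 + (L : ℝ≥0∞) ^ 2) * ((N : ℝ≥0∞) ^ 2 *
            ((dmax : ℝ≥0∞) * (‖Qlam f‖₊ : ℝ≥0∞) ^ 2)) := by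
          exact mul_le_mul_right (mul_le_mul_right h1 _) _
      _ = 4 * (1 + (L : ℝ≥0∞) ^ 2) * (N : ℝ≥0∞) ^ 2 * (dmax : ℝ≥0∞) *
            (‖Qlam f‖₊ : ℝ≥0∞) ^ 2 := by ring
  -- convert to a real bound
  obtain ⟨c, hc⟩ : ∃ c : ℝ≥0, ∀ f : lp (fun _ : V => ℂ) 2, ‖f‖ ≤ (c : ℝ) * ‖Qlam f‖ := by
    set Ktn : ℝ≥0 := 4 * (1 + L ^ 2) * N ^ 2 * dmax with hKtn
    set c : ℝ≥0 := NNReal.sqrt (Ktn / μ ^ 2) with hcdef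
    refine ⟨c, fun f => ?_⟩
    have hcsq : c ^ 2 * μ ^ 2 = Ktn := by
      rw [hcdef, NNReal.sq_sqrt, div_mul_cancel₀]
      exact pow_ne_zero 2 hμne
    have hb2 : (μ : ℝ≥0∞) ^ 2 * (‖f‖₊ : ℝ≥0∞) ^ 2 ≤
        (μ : ℝ≥0∞) ^ 2 * ((c : ℝ≥0∞) ^ 2 * (‖Qlam f‖₊ : ℝ≥0∞) ^ 2) := by
      have h1 := hbb f
      have h2 : (μ : ℝ≥0∞) ^ 2 * ((c : ℝ≥0∞) ^ 2 * (‖Qlam f‖₊ : ℝ≥0∞) ^ 2) =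
          4 * (1 + (L : ℝ≥0∞) ^ 2) * (N : ℝ≥0∞) ^ 2 * (dmax : ℝ≥0∞) *
            (‖Qlam f‖₊ : ℝ≥0∞) ^ 2 := by
        have h3 : ((Ktn : ℝ≥0) : ℝ≥0∞) = 4 * (1 + (L : ℝ≥0∞) ^ 2) * (N : ℝ≥0∞) ^ 2 *
            (dmax : ℝ≥0∞) := by
          rw [hKtn]; push_cast; ring
        calc (μ : ℝ≥0∞) ^ 2 * ((c : ℝ≥0∞) ^ 2 * (‖Qlam f‖₊ : ℝ≥0∞) ^ 2)
            = (((c ^ 2 * μ ^ 2 : ℝ≥0)) : ℝ≥0∞) * (‖Qlam f‖₊ : ℝ≥0∞) ^ 2 := by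
              push_cast; ring
          _ = ((Ktn : ℝ≥0) : ℝ≥0∞) * (‖Qlam f‖₊ : ℝ≥0∞) ^ 2 := by rw [hcsq]
          _ = _ := by rw [h3]
      rw [h2]
      exact h1
    have hb3 : (‖f‖₊ : ℝ≥0∞) ^ 2 ≤ (c : ℝ≥0∞) ^ 2 * (‖Qlam f‖₊ : ℝ≥0∞) ^ 2 := by
      have hμ2ne : ((μ : ℝ≥0∞) ^ 2) ≠ 0 := by
        simp [pow_eq_zero_iff, hμne]
      have hμ2top : ((μ : ℝ≥0∞) ^ 2) ≠ ⊤ := by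
        exact ENNReal.pow_ne_top ENNReal.coe_ne_top
      exact (ENNReal.mul_le_mul_iff_right hμ2ne hμ2top).mp hb2
    have hb4 : ‖f‖₊ ≤ c * ‖Qlam f‖₊ := nnreal_le_of_sq_le hb3
    calc ‖f‖ = ((‖f‖₊ : ℝ≥0) : ℝ) := rfl
      _ ≤ ((c * ‖Qlam f‖₊ : ℝ≥0) : ℝ) := by exact_mod_cast hb4
      _ = (c : ℝ) * ‖Qlam f‖ := by push_cast; rfl
  have hanti : AntilipschitzWith c Qlam := Qlam.antilipschitz_of_bound hc
  have hinj : Function.Injective Qlam := hanti.injective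
  have hclosed : IsClosed (Set.range (Qlam : lp (fun _ : V => ℂ) 2 → lp (fun _ : V => ℂ) 2)) :=
    hanti.isClosed_range Qlam.uniformContinuous
  have horth : (LinearMap.range (Qlam : lp (fun _ : V => ℂ) 2 →ₗ[ℂ] lp (fun _ : V => ℂ) 2))ᗮ = ⊥ := by
    rw [Submodule.eq_bot_iff]
    intro y hy
    have hy' : ∀ x : lp (fun _ : V => ℂ) 2, inner (𝕜 := ℂ) (Qlam x) y = 0 := fun x =>
      (Submodule.mem_orthogonal _ y).mp hy _ (LinearMap.mem_range_self _ x)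
    -- summability helpers
    have hsumtail : ∀ x : lp (fun _ : V => ℂ) 2,
        Summable (fun e : E => ‖x (tail e)‖ ^ 2) := by
      intro x
      have hne : (∑' e : E, (‖x (tail e)‖₊ : ℝ≥0∞) ^ 2) ≠ ⊤ := by
        rw [Stail (fun v => (‖x v‖₊ : ℝ≥0∞) ^ 2)]
        refine ne_top_of_le_ne_top (b := (dmax : ℝ≥0∞) * (‖x‖₊ : ℝ≥0∞) ^ 2) ?_ ?_
        · have h4 : (dmax : ℝ≥0∞) * (‖x‖₊ : ℝ≥0∞) ^ 2 =
              (((dmax : ℝ≥0) * ‖x‖₊ ^ 2 : ℝ≥0) : ℝ≥0∞) := by push_cast; ring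
          rw [h4]; exact ENNReal.coe_ne_top
        · rw [lp_nnnorm_sq_eq x, ← ENNReal.tsum_mul_left]
          exact Summable.tsum_le_tsum (fun v => mul_le_mul_left (hDle v) _)
            ENNReal.summable ENNReal.summable
      have h2 := ENNReal.summable_toReal hne
      simpa [ENNReal.toReal_pow] using h2
    have hsumhead : ∀ x : lp (fun _ : V => ℂ) 2,
        Summable (fun e : E => ‖x (head e)‖ ^ 2) := by
      intro x
      have hcomp : ((fun e : E => ‖x (head e)‖ ^ 2) ∘
          (Function.Involutive.toPerm inv hinv_inv)) = fun e : E => ‖x (tail e)‖ ^ 2 := by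
        funext e
        simp [Function.Involutive.coe_toPerm, head_inv]
        exact congrArg (fun t => ‖x t‖) (head_inv e)
      exact ((Function.Involutive.toPerm inv hinv_inv).summable_iff).mp
        (by rw [hcomp]; exact hsumtail x)
    -- A is symmetric
    have hAsym : ∀ x z : lp (fun _ : V => ℂ) 2,
        inner (𝕜 := ℂ) (A x) z = inner (𝕜 := ℂ) x (A z) := by
      intro x z
      have habs : ∀ (a b : ℝ), a * b ≤ (a ^ 2 + b ^ 2) / 2 := by
        intro a b; nlinarith [sq_nonneg (a - b)]
      have hFsumm : Summable (fun e : E => (starRingEnd ℂ) (x (head e)) * z (tail e)) := by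
        apply Summable.of_norm
        refine Summable.of_nonneg_of_le (fun e => norm_nonneg _) (fun e => ?_)
          (((hsumhead x).add (hsumtail z)).div_const 2)
        rw [norm_mul, RCLike.norm_conj]
        exact habs _ _
      have hGsumm : Summable (fun e : E => (starRingEnd ℂ) (x (tail e)) * z (head e)) := by
        apply Summable.of_norm
        refine Summable.of_nonneg_of_le (fun e => norm_nonneg _) (fun e => ?_)
          (((hsumtail x).add (hsumhead z)).div_const 2)
        rw [norm_mul, RCLike.norm_conj]
        exact habs _ _
      calc inner (𝕜 := ℂ) (A x) z
          = ∑' v : V, (starRingEnd ℂ) ((A x) v) * z v :=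
            (lp.inner_eq_tsum _ _).trans (tsum_congr fun v => by rw [RCLike.inner_apply]; ring)
        _ = ∑' v : V, ∑' ee : {e : E // tail e = v},
              (starRingEnd ℂ) (x (head ee.1)) * z (tail ee.1) := by
            refine tsum_congr fun v => ?_
            letI := Fintype.ofFinite {e : E // tail e = v}
            rw [hA, tsum_fintype, tsum_fintype, map_sum, Finset.sum_mul]
            refine Finset.sum_congr rfl fun ee _ => ?_
            rw [ee.2]
        _ = ∑' e : E, (starRingEnd ℂ) (x (head e)) * z (tail e) :=
            (tsum_fiber_complex tail _ hFsumm).symm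
        _ = ∑' e : E, (starRingEnd ℂ) (x (head (inv e))) * z (tail (inv e)) :=
            (tsum_inv_comm inv hinv_inv _).symm
        _ = ∑' e : E, (starRingEnd ℂ) (x (tail e)) * z (head e) := by
            refine tsum_congr fun e => ?_
            rw [head_inv, htail_inv]
        _ = ∑' v : V, ∑' ee : {e : E // tail e = v},
              (starRingEnd ℂ) (x (tail ee.1)) * z (head ee.1) :=
            tsum_fiber_complex tail _ hGsumm
        _ = ∑' v : V, (starRingEnd ℂ) (x v) * (A z) v := by
            refine tsum_congr fun v => ?_
            letI := Fintype.ofFinite {e : E // tail e = v}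
            rw [hA, tsum_fintype, tsum_fintype, Finset.mul_sum]
            refine Finset.sum_congr rfl fun ee _ => ?_
            rw [ee.2]
        _ = inner (𝕜 := ℂ) x (A z) :=
            ((lp.inner_eq_tsum _ _).trans (tsum_congr fun v => by
              rw [RCLike.inner_apply]; ring)).symm
    -- Q is symmetric
    have hQsym : ∀ x z : lp (fun _ : V => ℂ) 2,
        inner (𝕜 := ℂ) (Q x) z = inner (𝕜 := ℂ) x (Q z) := by
      intro x z
      rw [lp.inner_eq_tsum, lp.inner_eq_tsum]
      refine tsum_congr fun v => ?_
      rw [RCLike.inner_apply, RCLike.inner_apply, hQ, hQ, map_mul]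
      have h5 : (starRingEnd ℂ) ((Nat.card {e : E // tail e = v} : ℂ) - 1) =
          (Nat.card {e : E // tail e = v} : ℂ) - 1 := by
        rw [map_sub, map_one, Complex.conj_natCast]
      rw [h5]; ring
    have hQlam_vec : ∀ x : lp (fun _ : V => ℂ) 2,
        Qlam x = Q x - lam • A x + lam ^ 2 • x := by
      intro x
      rw [hQlamdef]
      simp [ContinuousLinearMap.add_apply, ContinuousLinearMap.sub_apply,
        ContinuousLinearMap.smul_apply]
    set zz : lp (fun _ : V => ℂ) 2 :=
      Q y - (starRingEnd ℂ) lam • A y + ((starRingEnd ℂ) lam) ^ 2 • y with hzz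
    have hzero : ∀ x : lp (fun _ : V => ℂ) 2, inner (𝕜 := ℂ) x zz = 0 := by
      intro x
      have h1 := hy' x
      rw [hQlam_vec x] at h1
      rw [hzz]
      simp only [inner_add_left, inner_sub_left, inner_smul_left,
        inner_add_right, inner_sub_right, inner_smul_right, map_pow] at h1 ⊢
      rw [hQsym x y, hAsym x y] at h1
      linear_combination h1
    have hzz0 : zz = 0 := by
      have h1 := hzero zz
      rwa [inner_self_eq_zero] at h1
    have hzv : ∀ v : V, ((D v : ℂ) - 1) * y v
        - (starRingEnd ℂ) lam * (∑' ee : {e : E // tail e = v}, y (head ee.1))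
        + ((starRingEnd ℂ) lam) ^ 2 * y v = 0 := by
      intro v
      have h1 : zz v = 0 := by rw [hzz0]; exact congrFun (lp.coeFn_zero _ _) v
      rw [hzz] at h1
      rw [lp.coeFn_add, lp.coeFn_sub, lp.coeFn_smul, lp.coeFn_smul] at h1
      simp only [Pi.add_apply, Pi.sub_apply, Pi.smul_apply, smul_eq_mul] at h1
      rw [hQ, hA] at h1
      simpa [hD] using h1
    have hybar : Memℓp (fun v : V => (starRingEnd ℂ) (y v)) 2 := by
      apply memℓp_gen
      have h1 := (memℓp_gen_iff (p := 2)
        (by norm_num : (0:ℝ) < (2 : ℝ≥0∞).toReal)).1 (lp.memℓp y)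
      simpa [RCLike.norm_conj] using h1
    set ybar : lp (fun _ : V => ℂ) 2 := ⟨fun v => (starRingEnd ℂ) (y v), hybar⟩ with hyb
    have hybar_apply : ∀ v : V, ybar v = (starRingEnd ℂ) (y v) := fun v => rfl
    have hQybar : Qlam ybar = 0 := by
      apply lp.ext
      funext v
      rw [lp.coeFn_zero, Pi.zero_apply, hQlam_apply]
      letI := Fintype.ofFinite {e : E // tail e = v}
      have h3 := congrArg (starRingEnd ℂ) (hzv v)
      rw [map_zero, map_add, map_sub, map_mul, map_mul, map_mul, map_pow] at h3
      have h4 : (starRingEnd ℂ) (∑' ee : {e : E // tail e = v}, y (head ee.1)) =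
          ∑' ee : {e : E // tail e = v}, (starRingEnd ℂ) (y (head ee.1)) := by
        rw [tsum_fintype, tsum_fintype, map_sum]
      rw [h4] at h3
      have h5 : ∀ ee : {e : E // tail e = v}, ybar (head ee.1) =
          (starRingEnd ℂ) (y (head ee.1)) := fun ee => rfl
      simp only [hybar_apply, h5]
      simpa [Complex.conj_conj, map_sub, map_one, Complex.conj_natCast] using h3
    have hybar0 : ybar = 0 := hinj (by rw [hQybar, map_zero])
    apply lp.ext
    funext v
    rw [lp.coeFn_zero, Pi.zero_apply]
    have h1 : ybar v = 0 := by rw [hybar0]; exact congrFun (lp.coeFn_zero _ _) v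
    rw [hybar_apply] at h1
    have h2 := congrArg (starRingEnd ℂ) h1
    simpa [Complex.conj_conj] using h2
  have hrange : LinearMap.range (Qlam : lp (fun _ : V => ℂ) 2 →ₗ[ℂ] lp (fun _ : V => ℂ) 2) = ⊤ := by
    have hdense := Submodule.topologicalClosure_eq_top_iff.mpr horth
    rwa [IsClosed.submodule_topologicalClosure_eq (by exact hclosed)] at hdense
  have hker : LinearMap.ker (Qlam : lp (fun _ : V => ℂ) 2 →ₗ[ℂ] lp (fun _ : V => ℂ) 2) = ⊥ := LinearMap.ker_eq_bot.mpr hinj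
  exact hQlam ⟨(ContinuousLinearEquiv.unitsEquiv ℂ _).symm
    (ContinuousLinearEquiv.ofBijective Qlam hker hrange), by ext x; rfl⟩
end

section
/- With S_o, S_i as above and Q_lambda = lambda^2 I - lambda A + Q, one has the operator identity Q_lambda S_o = (S_i - lambda S_o)(B - lambda I). Hence if g is a 1-form with ||(B - lambda I)g|| < epsilon, then ||Q_lambda (S_o g)|| <= (1 + |lambda|) sqrt(d_max) epsilon. -/
/-- With `S_o`, `S_i` as before (satisfying `S_i B = Q S_o` and
`S_o B = A S_o - S_i`, with `‖S_o‖ = ‖S_i‖ = √dmax`) and `Q_λ = λ²I - λA + Q`, one has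
the operator identity `Q_λ S_o = (S_i - λ S_o)(B - λ I)`; hence if `g` is a 1-form with
`‖(B - λI)g‖ < ε` then `‖Q_λ (S_o g)‖ ≤ (1 + |λ|)·√dmax·ε`. -/
theorem Qlambda_So_factorization
    {V E : Type}
    (dmax : ℕ)
    (B : lp (fun _ : E => ℂ) 2 →L[ℂ] lp (fun _ : E => ℂ) 2)
    (A Q : lp (fun _ : V => ℂ) 2 →L[ℂ] lp (fun _ : V => ℂ) 2)
    (So Si : lp (fun _ : E => ℂ) 2 →L[ℂ] lp (fun _ : V => ℂ) 2)
    (hSiB : Si ∘L B = Q ∘L So)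
    (hSoB : So ∘L B = A ∘L So - Si)
    (hSonorm : ‖So‖ = Real.sqrt dmax)
    (hSinorm : ‖Si‖ = Real.sqrt dmax)
    (lam : ℂ) :
    (lam ^ 2 • (1 : lp (fun _ : V => ℂ) 2 →L[ℂ] lp (fun _ : V => ℂ) 2) - lam • A + Q) ∘L So =
        (Si - lam • So) ∘L (B - lam • 1) ∧
      ∀ (g : lp (fun _ : E => ℂ) 2) (ε : ℝ), ‖(B - lam • 1) g‖ < ε →
        ‖(lam ^ 2 • (1 : lp (fun _ : V => ℂ) 2 →L[ℂ] lp (fun _ : V => ℂ) 2) -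
            lam • A + Q) (So g)‖ ≤ (1 + ‖lam‖) * Real.sqrt dmax * ε := by
  have key : (lam ^ 2 • (1 : lp (fun _ : V => ℂ) 2 →L[ℂ] lp (fun _ : V => ℂ) 2) - lam • A + Q) ∘L So =
      (Si - lam • So) ∘L (B - lam • 1) := by
    simp only [ContinuousLinearMap.sub_comp, ContinuousLinearMap.comp_sub,
      ContinuousLinearMap.add_comp, ContinuousLinearMap.smul_comp,
      ContinuousLinearMap.comp_smul, ContinuousLinearMap.one_def,
      ContinuousLinearMap.comp_id, ContinuousLinearMap.id_comp, hSiB, hSoB]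
    module
  refine ⟨key, fun g ε hg => ?_⟩
  have hQ : (lam ^ 2 • (1 : lp (fun _ : V => ℂ) 2 →L[ℂ] lp (fun _ : V => ℂ) 2) - lam • A + Q) (So g)
      = (Si - lam • So) ((B - lam • 1) g) := by
    exact DFunLike.congr_fun key g
  rw [hQ]
  calc ‖(Si - lam • So) ((B - lam • 1) g)‖
      ≤ ‖Si - lam • So‖ * ‖(B - lam • 1) g‖ := (Si - lam • So).le_opNorm _
    _ ≤ (1 + ‖lam‖) * Real.sqrt dmax * ε := by
        have h1 : ‖Si - lam • So‖ ≤ (1 + ‖lam‖) * Real.sqrt dmax := by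
          calc ‖Si - lam • So‖ ≤ ‖Si‖ + ‖lam • So‖ := norm_sub_le _ _
            _ = Real.sqrt dmax + ‖lam‖ * Real.sqrt dmax := by
                rw [show ‖lam • So‖ = ‖lam‖ * ‖So‖ from norm_smul lam So, hSinorm, hSonorm]
            _ = (1 + ‖lam‖) * Real.sqrt dmax := by ring
        have hε : (0:ℝ) ≤ ε := le_of_lt (lt_of_le_of_lt (norm_nonneg _) hg)
        have h0 : (0:ℝ) ≤ (1 + ‖lam‖) * Real.sqrt dmax := by positivity
        exact mul_le_mul h1 hg.le (norm_nonneg _) h0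
end

section
/- Let T be a locally finite tree, M a connected local symmetric bounded invertible operator on l^2(V(T)) with Green function G, and e = (u,v) a directed edge. Define the relative kernel ker_e as the space of l^2 functions f supported on the branch T_e (the component of v in T minus e, together with u) with (Mf)(w) = 0 for all w in T_e other than u, and the relative null-kernel as those f in ker_e with f(u) = 0. Then: (i) if G(u,u) ≠ 0, ker_e is one-dimensional; (ii) if G(u,u) = G(u,v) = 0, ker_e is one-dimensional; (iii) if G(u,u) = 0 and G(u,v) ≠ 0, the relative null-kernel is one-dimensional. -/
open scoped ComplexConjugate

section GraphLemmas
open SimpleGraph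
set_option linter.unusedSectionVars false

variable {T : Type} [DecidableEq T] (Γ : SimpleGraph T)

lemma tree_path_length (hT : Γ.IsTree) {a b : T} (p : Γ.Walk a b) (hp : p.IsPath) :
    p.length = Γ.dist a b := by
  obtain ⟨q, hq⟩ := hT.isConnected.exists_walk_length_eq_dist a b
  have hqp : q.IsPath := q.isPath_of_length_eq_dist hq
  have := hT.existsUnique_path a b
  obtain ⟨r, -, hr⟩ := this
  rw [hr p hp, ← hr q hqp]
  exact hq

lemma adj_dist_dichotomy (hT : Γ.IsTree) {x y : T} (hxy : Γ.Adj x y) (r : T) :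
    Γ.dist x r = Γ.dist y r + 1 ∨ Γ.dist y r = Γ.dist x r + 1 := by
  obtain ⟨p, hp⟩ := hT.isConnected.exists_walk_length_eq_dist y r
  have hpp : p.IsPath := p.isPath_of_length_eq_dist hp
  by_cases hx : x ∈ p.support
  · right
    have hd : (p.dropUntil x hx).length = Γ.dist x r :=
      tree_path_length Γ hT _ (hpp.dropUntil hx)
    have ht : (p.takeUntil x hx).length = Γ.dist y x :=
      tree_path_length Γ hT _ (hpp.takeUntil hx)
    have hyx : Γ.dist y x = 1 := (Γ.dist_eq_one_iff_adj).2 hxy.symm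
    have := congr_arg Walk.length (p.take_spec hx)
    rw [Walk.length_append, ht, hd, hyx, hp] at this
    omega
  · left
    have : (Walk.cons hxy p).IsPath := hpp.cons hx
    have := tree_path_length Γ hT _ this
    rw [Walk.length_cons, hp] at this
    omega

lemma crossing_lemma (hT : Γ.IsTree) {u v x y : T} (huv : Γ.Adj u v) (hxy : Γ.Adj x y)
    (h1 : Γ.dist x u = Γ.dist x v + 1) (h2 : Γ.dist y v = Γ.dist y u + 1) :
    x = v ∧ y = u := by
  -- derive the distance values
  have hxu : Γ.dist x u = Γ.dist y u + 1 := by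
    rcases adj_dist_dichotomy Γ hT hxy u with h | h
    · exact h
    · exfalso
      rcases adj_dist_dichotomy Γ hT hxy v with h' | h' <;> omega
  set k := Γ.dist y u with hk
  have hxv : Γ.dist x v = k := by omega
  have hyv : Γ.dist y v = k + 1 := h2
  -- the path from x to v
  obtain ⟨q, hq⟩ := hT.isConnected.exists_walk_length_eq_dist x v
  have hqp : q.IsPath := q.isPath_of_length_eq_dist hq
  rw [hxv] at hq
  -- the path from y to u
  obtain ⟨p, hp⟩ := hT.isConnected.exists_walk_length_eq_dist y u
  have hpp : p.IsPath := p.isPath_of_length_eq_dist hp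
  rw [← hk] at hp
  -- u is not in q's support
  have hu_q : u ∉ q.support := by
    intro h
    have h1' : (q.takeUntil u h).length = Γ.dist x u := tree_path_length Γ hT _ (hqp.takeUntil h)
    have h2' := q.length_takeUntil_le h
    omega
  -- x is not in p's support
  have hx_p : x ∉ p.support := by
    intro h
    have h1' : (p.dropUntil x h).length = Γ.dist x u := tree_path_length Γ hT _ (hpp.dropUntil h)
    have h2' := congr_arg Walk.length (p.take_spec h)
    rw [Walk.length_append] at h2'
    omega
  -- the two paths from x to u
  have hq' : (q.concat huv.symm).IsPath := by
    rw [← Walk.isPath_reverse_iff, Walk.reverse_concat]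
    exact (hqp.reverse).cons (by simpa using hu_q)
  have hp' : (Walk.cons hxy p).IsPath := hpp.cons hx_p
  obtain ⟨r, -, hr⟩ := hT.existsUnique_path x u
  have heq : Walk.cons hxy p = q.concat huv.symm := by
    rw [hr _ hp', hr _ hq']
  have hv_mem : v ∈ (Walk.cons hxy p).support := by
    rw [heq, Walk.support_concat]
    simp [q.end_mem_support]
  rw [Walk.support_cons] at hv_mem
  rcases List.mem_cons.1 hv_mem with h | h
  · -- v = x
    have hxveq : x = v := h.symm
    have : k = 0 := by
      rw [← hxv, hxveq, SimpleGraph.dist_self]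
    have hyu : y = u := by
      have := (hT.isConnected.dist_eq_zero_iff (u := y) (v := u)).1 (by omega)
      exact this
    exact ⟨hxveq, hyu⟩
  · -- v ∈ p.support : contradiction
    exfalso
    have h1' : (p.takeUntil v h).length = Γ.dist y v := tree_path_length Γ hT _ (hpp.takeUntil h)
    have h2' := p.length_takeUntil_le h
    omega

section Branch

lemma v_mem_branch {u v : T} (huv : Γ.Adj u v) : Γ.dist v u = Γ.dist v v + 1 := by
  have h1 : Γ.dist v u = 1 := SimpleGraph.dist_eq_one_iff_adj.2 huv.symm
  have h2 : Γ.dist v v = 0 := SimpleGraph.dist_self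
  omega

lemma dichotomy' (hT : Γ.IsTree) {u v : T} (huv : Γ.Adj u v) (w : T) :
    Γ.dist w u = Γ.dist w v + 1 ∨ Γ.dist w v = Γ.dist w u + 1 := by
  have := adj_dist_dichotomy Γ hT huv w
  have c1 : Γ.dist u w = Γ.dist w u := SimpleGraph.dist_comm
  have c2 : Γ.dist v w = Γ.dist w v := SimpleGraph.dist_comm
  omega

lemma not_branch_iff (hT : Γ.IsTree) {u v : T} (huv : Γ.Adj u v) {w : T} (hw : w ≠ u) :
    ¬ (w = u ∨ Γ.dist w u = Γ.dist w v + 1) ↔ Γ.dist w v = Γ.dist w u + 1 := by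
  have := dichotomy' Γ hT huv w
  constructor
  · intro h
    rcases this with h' | h'
    · exact absurd (Or.inr h') h
    · exact h'
  · intro h hmem
    rcases hmem with h' | h'
    · exact hw h'
    · omega

lemma branch_closed (hT : Γ.IsTree) {u v x y : T} (huv : Γ.Adj u v)
    (hx : x = u ∨ Γ.dist x u = Γ.dist x v + 1) (hxu : x ≠ u)
    (hxy : Γ.Adj x y) : y = u ∨ Γ.dist y u = Γ.dist y v + 1 := by
  by_contra h
  push_neg at h
  obtain ⟨hyu, hyd⟩ := h
  have hy : Γ.dist y v = Γ.dist y u + 1 := by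
    rcases dichotomy' Γ hT huv y with h' | h'
    · exact absurd h' hyd
    · exact h'
  have hx' : Γ.dist x u = Γ.dist x v + 1 := hx.resolve_left hxu
  exact hyu (crossing_lemma Γ hT huv hxy hx' hy).2

lemma branch_nbr_u (hT : Γ.IsTree) {u v x : T} (huv : Γ.Adj u v) (hxu : Γ.Adj x u) :
    (x = u ∨ Γ.dist x u = Γ.dist x v + 1) ↔ x = v := by
  constructor
  · intro hx
    have hxne : x ≠ u := hxu.ne
    have hx' : Γ.dist x u = Γ.dist x v + 1 := hx.resolve_left hxne
    have : Γ.dist u v = Γ.dist u u + 1 := by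
      have h1 : Γ.dist u v = 1 := SimpleGraph.dist_eq_one_iff_adj.2 huv
      have h2 : Γ.dist u u = 0 := SimpleGraph.dist_self
      omega
    exact (crossing_lemma Γ hT huv hxu hx' this).1
  · rintro rfl
    exact Or.inr (v_mem_branch Γ huv)

end Branch

end GraphLemmas

namespace RelKer

variable {T : Type} [DecidableEq T]

noncomputable abbrev δ (x : T) : lp (fun _ : T => ℂ) 2 := lp.single 2 x (1 : ℂ)

lemma single_one_apply (x y : T) : (δ y) x = if x = y then (1:ℂ) else 0 := by
  rcases eq_or_ne x y with h | h
  · subst h; simp [lp.single_apply_self]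
  · simp [lp.single_apply_ne 2 y _ h, h]

noncomputable def evalCLM (x : T) : lp (fun _ : T => ℂ) 2 →L[ℂ] ℂ :=
  LinearMap.mkContinuous
    { toFun := fun f => f x
      map_add' := fun f g => by simp [lp.coeFn_add]
      map_smul' := fun c f => by simp [lp.coeFn_smul] }
    1 (fun f => by
      show ‖f x‖ ≤ 1 * ‖f‖
      simpa using lp.norm_apply_le_norm (p := 2) (by norm_num) f x)

@[simp] lemma evalCLM_apply (x : T) (f : lp (fun _ : T => ℂ) 2) : evalCLM x f = f x := rfl

lemma hasSum_single_smul (f : lp (fun _ : T => ℂ) 2) :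
    HasSum (fun y => f y • δ y) f := by
  have h1 : HasSum (fun y => lp.single 2 y (f y)) f :=
    lp.hasSum_single (by norm_num) f
  have : (fun y => f y • δ y) = fun y => lp.single 2 y (f y) := by
    funext y
    rw [← lp.single_smul, smul_eq_mul, mul_one]
  rwa [this]

lemma hasSum_apply (A : lp (fun _ : T => ℂ) 2 →L[ℂ] lp (fun _ : T => ℂ) 2)
    (f : lp (fun _ : T => ℂ) 2) (x : T) :
    HasSum (fun y => f y * A (δ y) x) (A f x) := by
  have h2 := A.hasSum (hasSum_single_smul f)
  have h3 := (evalCLM x).hasSum h2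
  simpa [map_smul, smul_eq_mul] using h3

section Graph
variable (Γ : SimpleGraph T) [∀ w : T, Fintype (Γ.neighborSet w)]
variable (M : lp (fun _ : T => ℂ) 2 →L[ℂ] lp (fun _ : T => ℂ) 2)
lemma entry_zero (hloc : ∀ x y : T, x ≠ y → (M (δ y) x ≠ 0 ↔ Γ.Adj x y)) {x y : T} (hne : y ≠ x) (hadj : ¬ Γ.Adj x y) : M (δ y) x = 0 := by
  by_contra h
  exact hadj ((hloc x y hne.symm).1 h)

lemma apply_eq_sum (hloc : ∀ x y : T, x ≠ y → (M (δ y) x ≠ 0 ↔ Γ.Adj x y)) (f : lp (fun _ : T => ℂ) 2) (x : T) :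
    M f x = ∑ y ∈ insert x (Γ.neighborFinset x), f y * M (δ y) x := by
  refine ((hasSum_apply M f x).tsum_eq.symm).trans (tsum_eq_sum ?_)
  intro y hy
  simp only [Finset.mem_insert, SimpleGraph.mem_neighborFinset] at hy
  push_neg at hy
  rw [entry_zero Γ M hloc hy.1 hy.2, mul_zero]

lemma apply_congr (hloc : ∀ x y : T, x ≠ y → (M (δ y) x ≠ 0 ↔ Γ.Adj x y)) (f g : lp (fun _ : T => ℂ) 2) (x : T)
    (h : ∀ y ∈ insert x (Γ.neighborFinset x), f y = g y) : M f x = M g x := by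
  rw [apply_eq_sum Γ M hloc, apply_eq_sum Γ M hloc]
  exact Finset.sum_congr rfl fun y hy => by rw [h y hy]

end Graph

noncomputable def restr (P : T → Prop) [DecidablePred P] (f : lp (fun _ : T => ℂ) 2) :
    lp (fun _ : T => ℂ) 2 :=
  ⟨fun x => if P x then f x else 0, by
    apply memℓp_gen
    have hs := (lp.memℓp f).summable (p := 2) (by norm_num)
    refine hs.of_nonneg_of_le (fun x => Real.rpow_nonneg (norm_nonneg _) _) (fun x => ?_)
    rcases eq_or_ne ((if P x then f x else 0 : ℂ)) (f x) with h | h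
    · rw [h]
    · have : (if P x then f x else 0 : ℂ) = 0 := by
        by_cases hP : P x
        · simp [hP] at h
        · simp [hP]
      rw [this]
      simp only [norm_zero]
      refine Real.rpow_le_rpow le_rfl (norm_nonneg _) ?_
      norm_num⟩

lemma restr_apply (P : T → Prop) [DecidablePred P] (f : lp (fun _ : T => ℂ) 2) (x : T) :
    restr P f x = if P x then f x else 0 := rfl

noncomputable def conjlp (f : lp (fun _ : T => ℂ) 2) : lp (fun _ : T => ℂ) 2 :=
  ⟨fun x => conj (f x), by
    apply memℓp_gen
    have hs := (lp.memℓp f).summable (p := 2) (by norm_num)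
    refine hs.of_nonneg_of_le (fun x => Real.rpow_nonneg (norm_nonneg _) _) (fun x => ?_)
    rw [RCLike.norm_conj]⟩

lemma conjlp_apply (f : lp (fun _ : T => ℂ) 2) (x : T) : conjlp f x = conj (f x) := rfl

noncomputable def Bform (f g : lp (fun _ : T => ℂ) 2) : ℂ := ∑' x, f x * g x

lemma Bform_eq_inner (f g : lp (fun _ : T => ℂ) 2) :
    Bform f g = inner (𝕜 := ℂ) (conjlp f) g := by
  rw [lp.inner_eq_tsum]
  refine tsum_congr fun x => ?_
  rw [RCLike.inner_apply, conjlp_apply, Complex.conj_conj]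
  exact mul_comm _ _

lemma Bform_comm (f g : lp (fun _ : T => ℂ) 2) : Bform f g = Bform g f :=
  tsum_congr fun x => mul_comm _ _

lemma Bform_single_right (f : lp (fun _ : T => ℂ) 2) (x : T) : Bform f (δ x) = f x := by
  refine (tsum_eq_single x fun y hy => ?_).trans (by rw [single_one_apply]; simp)
  rw [single_one_apply, if_neg hy, mul_zero]

lemma Bform_single_left (f : lp (fun _ : T => ℂ) 2) (x : T) : Bform (δ x) f = f x := by
  rw [Bform_comm]; exact Bform_single_right f x

lemma clm_ext_single (Φ Ψ : lp (fun _ : T => ℂ) 2 →L[ℂ] ℂ)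
    (h : ∀ x, Φ (δ x) = Ψ (δ x)) (f : lp (fun _ : T => ℂ) 2) : Φ f = Ψ f := by
  have h1 := Φ.hasSum (hasSum_single_smul f)
  have h2 := Ψ.hasSum (hasSum_single_smul f)
  refine h1.unique ?_
  refine h2.congr_fun fun y => ?_
  rw [map_smul, map_smul, h y]

lemma Bform_sym (M : lp (fun _ : T => ℂ) 2 →L[ℂ] lp (fun _ : T => ℂ) 2)
    (hsym : ∀ x y : T, M (δ y) x = M (δ x) y)
    (f g : lp (fun _ : T => ℂ) 2) : Bform (M f) g = Bform f (M g) := by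
  have key : ∀ h : lp (fun _ : T => ℂ) 2,
      ((innerSL ℂ (conjlp g)).comp M) h = (innerSL ℂ (conjlp (M g))) h := by
    intro h
    refine clm_ext_single _ _ (fun x => ?_) h
    have lhs : ((innerSL ℂ (conjlp g)).comp M) (δ x) = Bform g (M (δ x)) := by
      rw [Bform_eq_inner]; rfl
    have rhs : (innerSL ℂ (conjlp (M g))) (δ x) = Bform (M g) (δ x) := by
      rw [Bform_eq_inner]; rfl
    rw [lhs, rhs, Bform_single_right]
    have h1 : HasSum (fun y => g y * M (δ y) x) (M g x) := hasSum_apply M g x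
    have h2 : HasSum (fun y => g y * M (δ x) y) (M g x) := by
      refine h1.congr_fun fun y => ?_
      rw [hsym x y]
    exact (h2.tsum_eq)
  have l1 : Bform (M f) g = ((innerSL ℂ (conjlp g)).comp M) f := by
    rw [Bform_comm, Bform_eq_inner]; rfl
  have l2 : Bform f (M g) = (innerSL ℂ (conjlp (M g))) f := by
    rw [Bform_comm, Bform_eq_inner]; rfl
  rw [l1, l2, key f]

lemma green_sym (M Minv : lp (fun _ : T => ℂ) 2 →L[ℂ] lp (fun _ : T => ℂ) 2)
    (hMinv₂ : M ∘L Minv = 1)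
    (hsym : ∀ x y : T, M (δ y) x = M (δ x) y) (x y : T) :
    Minv (δ x) y = Minv (δ y) x := by
  have hMr : ∀ f, M (Minv f) = f := fun f => by
    have := congrArg (fun A : lp (fun _ : T => ℂ) 2 →L[ℂ] lp (fun _ : T => ℂ) 2 => A f) hMinv₂
    simpa using this
  calc Minv (δ x) y = Bform (Minv (δ x)) (δ y) := (Bform_single_right _ _).symm
    _ = Bform (Minv (δ x)) (M (Minv (δ y))) := by rw [hMr]
    _ = Bform (M (Minv (δ x))) (Minv (δ y)) := (Bform_sym M hsym _ _).symm
    _ = Bform (δ x) (Minv (δ y)) := by rw [hMr]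
    _ = Minv (δ y) x := Bform_single_left _ _

variable (Γ : SimpleGraph T)

abbrev Bpred (u v w : T) : Prop := w = u ∨ Γ.dist w u = Γ.dist w v + 1

noncomputable def Sfin [∀ w : T, Fintype (Γ.neighborSet w)] (u v : T) : Finset T :=
  (Γ.neighborFinset u).filter (fun x => ¬ Bpred Γ u v x)

lemma svec_apply [∀ w : T, Fintype (Γ.neighborSet w)]
    (M : lp (fun _ : T => ℂ) 2 →L[ℂ] lp (fun _ : T => ℂ) 2) (u v x : T) :
    (∑ y ∈ Sfin Γ u v, (M (δ u) y) • δ y) x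
      = if x ∈ Sfin Γ u v then M (δ u) x else 0 := by
  rw [lp.coeFn_sum, Finset.sum_apply]
  rw [show (∑ y ∈ Sfin Γ u v, ((M (δ u) y) • δ y) x)
      = ∑ y ∈ Sfin Γ u v, if x = y then M (δ u) y else 0 from
    Finset.sum_congr rfl fun y _ => by
      simp [lp.coeFn_smul, single_one_apply, mul_ite, Pi.single_apply]]
  exact Finset.sum_ite_eq _ _ _

lemma u_not_mem_Sfin [∀ w : T, Fintype (Γ.neighborSet w)] (u v : T) :
    u ∉ Sfin Γ u v := by
  intro h
  rw [Sfin, Finset.mem_filter, SimpleGraph.mem_neighborFinset] at h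
  exact Γ.irrefl h.1

lemma decomp (hT : Γ.IsTree) [∀ w : T, Fintype (Γ.neighborSet w)]
    (M Minv : lp (fun _ : T => ℂ) 2 →L[ℂ] lp (fun _ : T => ℂ) 2)
    (hMinv₁ : Minv ∘L M = 1)
    (hloc : ∀ x y : T, x ≠ y → (M (δ y) x ≠ 0 ↔ Γ.Adj x y))
    (u v : T) (huv : Γ.Adj u v)
    (h : lp (fun _ : T => ℂ) 2)
    (h1 : ∀ x, ¬ Bpred Γ u v x → h x = 0)
    (h2 : ∀ x, Bpred Γ u v x → x ≠ u → M h x = 0) :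
    h = (M h u) • Minv (δ u) + (h u) • Minv (∑ y ∈ Sfin Γ u v, (M (δ u) y) • δ y) := by
  have hBu : Bpred Γ u v u := Or.inl rfl
  have hstep : M h = (M h u) • δ u + (h u) • (∑ y ∈ Sfin Γ u v, (M (δ u) y) • δ y) := by
    refine lp.ext (funext fun x => ?_)
    have hrhs : ((M h u) • δ u + (h u) • (∑ y ∈ Sfin Γ u v, (M (δ u) y) • δ y)) x
        = (M h u) * (if x = u then 1 else 0)
          + (h u) * (if x ∈ Sfin Γ u v then M (δ u) x else 0) := by
      change (M h u) * (δ u) x + (h u) * (∑ y ∈ Sfin Γ u v, (M (δ u) y) • δ y) x = _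
      rw [single_one_apply, svec_apply]
    rw [hrhs]
    by_cases hxu : x = u
    · rw [hxu, if_pos rfl, if_neg (u_not_mem_Sfin Γ u v), mul_one, mul_zero, add_zero]
    · by_cases hBx : Bpred Γ u v x
      · rw [h2 x hBx hxu, if_neg hxu, if_neg (fun hmem => by
          rw [Sfin, Finset.mem_filter] at hmem
          exact hmem.2 hBx), mul_zero, mul_zero, add_zero]
      · -- x outside the branch
        have hlhs : M h x = h u * M (δ u) x := by
          rw [apply_eq_sum Γ M hloc h x]
          refine Finset.sum_eq_single u (fun y hy hyu => ?_) (fun hu => ?_)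
          · by_cases hBy : Bpred Γ u v y
            · exfalso
              rcases Finset.mem_insert.1 hy with rfl | hy'
              · exact hBx hBy
              · rw [SimpleGraph.mem_neighborFinset] at hy'
                exact hBx (branch_closed Γ hT huv hBy hyu hy'.symm)
            · rw [h1 y hBy, zero_mul]
          · have : ¬ Γ.Adj x u := fun hadj => hu (by
              simp [SimpleGraph.mem_neighborFinset, hadj])
            rw [entry_zero Γ M hloc (Ne.symm hxu) this, mul_zero]
        rw [hlhs, if_neg hxu, mul_zero, zero_add]
        by_cases hadj : Γ.Adj u x
        · rw [if_pos (by
            rw [Sfin, Finset.mem_filter, SimpleGraph.mem_neighborFinset]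
            exact ⟨hadj, hBx⟩)]
        · have : M (δ u) x = 0 := entry_zero Γ M hloc (Ne.symm hxu)
            (fun hadj' => hadj hadj'.symm)
          rw [this, if_neg (fun hmem => by
            rw [Sfin, Finset.mem_filter, SimpleGraph.mem_neighborFinset] at hmem
            exact hadj hmem.1), mul_zero]
  have hMl : ∀ f, Minv (M f) = f := fun f => by
    have := congrArg (fun A : lp (fun _ : T => ℂ) 2 →L[ℂ] lp (fun _ : T => ℂ) 2 => A f) hMinv₁
    simpa using this
  calc h = Minv (M h) := (hMl h).symm
    _ = _ := by
      conv_lhs => rw [hstep]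
      rw [map_add, map_smul, map_smul]

end RelKer
/-- Let `T` be a locally finite tree, `M` a connected local symmetric
bounded invertible operator on `ℓ²(V(T))` with Green function `G`, and `e = (u,v)` a
directed edge. With `ker_e` the space of `ℓ²` functions supported on the branch `T_e`
(the component of `v` in `T - e`, together with `u`) such that `Mf` vanishes on
`T_e \ {u}`, and the relative null-kernel its subspace of functions vanishing at `u`:
(i) if `G(u,u) ≠ 0` then `ker_e` is one-dimensional; (ii) if `G(u,u) = G(u,v) = 0` then
`ker_e` is one-dimensional; (iii) if `G(u,u) = 0` and `G(u,v) ≠ 0` then the relative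
null-kernel is one-dimensional. -/
theorem relative_kernel_dimensions
    {T : Type} [DecidableEq T] (Γ : SimpleGraph T) (hT : Γ.IsTree)
    [∀ v : T, Fintype (Γ.neighborSet v)]
    (M Minv : lp (fun _ : T => ℂ) 2 →L[ℂ] lp (fun _ : T => ℂ) 2)
    (hMinv₁ : Minv ∘L M = 1) (hMinv₂ : M ∘L Minv = 1)
    -- symmetric: entries satisfy `M_{xy} = M_{yx}`
    (hsym : ∀ x y : T, M (lp.single 2 y (1 : ℂ)) x = M (lp.single 2 x (1 : ℂ)) y)
    -- local and connected: off-diagonal entries are nonzero exactly on edges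
    (hloc : ∀ x y : T, x ≠ y → (M (lp.single 2 y (1 : ℂ)) x ≠ 0 ↔ Γ.Adj x y))
    (u v : T) (huv : Γ.Adj u v) :
    -- `branch` is the vertex set of `T_e`: `u` together with the component of `v` in `T - uv`
    (let branch : Set T := {w | w = u ∨ Γ.dist w u = Γ.dist w v + 1}
     let inKer : lp (fun _ : T => ℂ) 2 → Prop := fun f =>
       (∀ x, x ∉ branch → f x = 0) ∧ (∀ w ∈ branch, w ≠ u → M f w = 0)
     let green : T → T → ℂ := fun x y => Minv (lp.single 2 x (1 : ℂ)) y
     -- (i)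
     (green u u ≠ 0 →
       ∃ f, f ≠ 0 ∧ inKer f ∧ ∀ g, inKer g → ∃ c : ℂ, g = c • f) ∧
     -- (ii)
     (green u u = 0 → green u v = 0 →
       ∃ f, f ≠ 0 ∧ inKer f ∧ ∀ g, inKer g → ∃ c : ℂ, g = c • f) ∧
     -- (iii)
     (green u u = 0 → green u v ≠ 0 →
       ∃ f, f ≠ 0 ∧ (inKer f ∧ f u = 0) ∧
         ∀ g, inKer g → g u = 0 → ∃ c : ℂ, g = c • f)) := by
  intro branch inKer green
  classical
  -- notation
  have hMl : ∀ f, Minv (M f) = f := fun f => by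
    have := congrArg
      (fun A : lp (fun _ : T => ℂ) 2 →L[ℂ] lp (fun _ : T => ℂ) 2 => A f) hMinv₁
    simpa using this
  have hMr : ∀ f, M (Minv f) = f := fun f => by
    have := congrArg
      (fun A : lp (fun _ : T => ℂ) 2 →L[ℂ] lp (fun _ : T => ℂ) 2 => A f) hMinv₂
    simpa using this
  have hBu : RelKer.Bpred Γ u v u := Or.inl rfl
  have hBv : RelKer.Bpred Γ u v v := Or.inr (v_mem_branch Γ huv)
  have hMw0 : ∀ x, M (Minv (RelKer.δ u)) x = if x = u then (1:ℂ) else 0 := fun x => by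
    rw [hMr]; exact RelKer.single_one_apply x u
  have heval : ∀ (a : ℂ) (p : lp (fun _ : T => ℂ) 2) (x : T), (a • p) x = a * p x :=
    fun a p x => by simp [lp.coeFn_smul]
  have hsubeval : ∀ (c : ℂ) (g f : lp (fun _ : T => ℂ) 2) (x : T),
      (g - c • f) x = g x - c * f x := fun c g f x => by
    simp [lp.coeFn_sub, lp.coeFn_smul]
    rfl
  -- the restriction of `Minv δ_u` to the branch
  have hfA_apply : ∀ x, RelKer.restr (RelKer.Bpred Γ u v) (Minv (RelKer.δ u)) x
      = if RelKer.Bpred Γ u v x then Minv (RelKer.δ u) x else 0 := fun x =>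
    RelKer.restr_apply _ _ x
  have hfA_ker : ∀ x, RelKer.Bpred Γ u v x → x ≠ u →
      M (RelKer.restr (RelKer.Bpred Γ u v) (Minv (RelKer.δ u))) x = 0 := by
    intro x hx hxu
    have hcg : M (RelKer.restr (RelKer.Bpred Γ u v) (Minv (RelKer.δ u))) x
        = M (Minv (RelKer.δ u)) x := by
      refine RelKer.apply_congr Γ M hloc _ _ x (fun y hy => ?_)
      rcases Finset.mem_insert.1 hy with rfl | hy'
      · rw [hfA_apply, if_pos hx]
      · rw [SimpleGraph.mem_neighborFinset] at hy'
        rw [hfA_apply, if_pos (branch_closed Γ hT huv hx hxu hy')]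
    rw [hcg, hMw0, if_neg hxu]
  have hfA_inKer : inKer (RelKer.restr (RelKer.Bpred Γ u v) (Minv (RelKer.δ u))) :=
    ⟨fun x hx => by rw [hfA_apply, if_neg (show ¬ RelKer.Bpred Γ u v x from hx)],
      fun x hx hxu => hfA_ker x hx hxu⟩
  have hfAu : RelKer.restr (RelKer.Bpred Γ u v) (Minv (RelKer.δ u)) u
      = Minv (RelKer.δ u) u := by rw [hfA_apply, if_pos hBu]
  -- combinations stay in the kernel
  have hcomb : ∀ (g f : lp (fun _ : T => ℂ) 2) (c : ℂ), inKer g → inKer f →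
      inKer (g - c • f) := by
    intro g f c hg hf
    constructor
    · intro x hx
      rw [hsubeval, hg.1 x hx, hf.1 x hx, mul_zero, sub_zero]
    · intro x hx hxu
      have hMe : M (g - c • f) = M g - c • M f := by rw [map_sub, map_smul]
      have : M (g - c • f) x = M g x - c * M f x := by
        rw [hMe]; exact hsubeval c (M g) (M f) x
      rw [this, hg.2 x hx hxu, hf.2 x hx hxu, mul_zero, sub_zero]
  have hdec : ∀ h : lp (fun _ : T => ℂ) 2, (∀ x, ¬ RelKer.Bpred Γ u v x → h x = 0) →
      (∀ x, RelKer.Bpred Γ u v x → x ≠ u → M h x = 0) →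
      h = (M h u) • Minv (RelKer.δ u)
        + (h u) • Minv (∑ y ∈ RelKer.Sfin Γ u v, (M (RelKer.δ u) y) • RelKer.δ y) :=
    fun h h1 h2 => RelKer.decomp Γ hT M Minv hMinv₁ hloc u v huv h h1 h2
  -- facts about the restriction of `Minv δ_u` to the complement, valid when `G(u,u) = 0`
  have hfB_zero_of : Minv (RelKer.δ u) u = 0 → ∀ x, x ≠ u →
      M (RelKer.restr (fun x => ¬ RelKer.Bpred Γ u v x) (Minv (RelKer.δ u))) x = 0 := by
    intro hGuu x hxu
    by_cases hBx : RelKer.Bpred Γ u v x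
    · rw [RelKer.apply_eq_sum Γ M hloc]
      refine Finset.sum_eq_zero fun y hy => ?_
      have hBy : RelKer.Bpred Γ u v y := by
        rcases Finset.mem_insert.1 hy with rfl | hy'
        · exact hBx
        · rw [SimpleGraph.mem_neighborFinset] at hy'
          exact branch_closed Γ hT huv hBx hxu hy'
      rw [RelKer.restr_apply, if_neg (not_not_intro hBy), zero_mul]
    · have hcg : M (RelKer.restr (fun x => ¬ RelKer.Bpred Γ u v x) (Minv (RelKer.δ u))) x
          = M (Minv (RelKer.δ u)) x := by
        refine RelKer.apply_congr Γ M hloc _ _ x (fun y hy => ?_)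
        by_cases hBy : RelKer.Bpred Γ u v y
        · have hyu : y = u := by
            rcases Finset.mem_insert.1 hy with rfl | hy'
            · exact absurd hBy hBx
            · by_contra hne
              rw [SimpleGraph.mem_neighborFinset] at hy'
              exact hBx (branch_closed Γ hT huv hBy hne hy'.symm)
          subst hyu
          rw [RelKer.restr_apply, if_neg (not_not_intro hBu), hGuu]
        · rw [RelKer.restr_apply, if_pos hBy]
      rw [hcg, hMw0, if_neg hxu]
  have hfBw_of : Minv (RelKer.δ u) u = 0 →
      RelKer.restr (fun x => ¬ RelKer.Bpred Γ u v x) (Minv (RelKer.δ u))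
        = (M (RelKer.restr (fun x => ¬ RelKer.Bpred Γ u v x) (Minv (RelKer.δ u))) u)
            • Minv (RelKer.δ u) := by
    intro hGuu
    have hstep : M (RelKer.restr (fun x => ¬ RelKer.Bpred Γ u v x) (Minv (RelKer.δ u)))
        = (M (RelKer.restr (fun x => ¬ RelKer.Bpred Γ u v x) (Minv (RelKer.δ u))) u)
            • RelKer.δ u := by
      refine lp.ext (funext fun x => ?_)
      have hr : ((M (RelKer.restr (fun x => ¬ RelKer.Bpred Γ u v x) (Minv (RelKer.δ u))) u)
          • RelKer.δ u) x
          = (M (RelKer.restr (fun x => ¬ RelKer.Bpred Γ u v x) (Minv (RelKer.δ u))) u)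
            * (if x = u then 1 else 0) := by
        rw [heval, RelKer.single_one_apply]
      rw [hr]
      by_cases hxu : x = u
      · rw [hxu, if_pos rfl, mul_one]
      · rw [if_neg hxu, mul_zero, hfB_zero_of hGuu x hxu]
    calc RelKer.restr (fun x => ¬ RelKer.Bpred Γ u v x) (Minv (RelKer.δ u))
        = Minv (M (RelKer.restr (fun x => ¬ RelKer.Bpred Γ u v x) (Minv (RelKer.δ u)))) :=
          (hMl _).symm
      _ = _ := by
          conv_lhs => rw [hstep]
          rw [map_smul]
  refine ⟨?_, ?_, ?_⟩
  · -- case (i)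
    intro hG
    have hG' : Minv (RelKer.δ u) u ≠ 0 := hG
    refine ⟨RelKer.restr (RelKer.Bpred Γ u v) (Minv (RelKer.δ u)), ?_, hfA_inKer, ?_⟩
    · intro h0
      apply hG'
      rw [← hfAu, h0]
      simp [lp.coeFn_zero]
    · intro g hg
      refine ⟨g u / Minv (RelKer.δ u) u, ?_⟩
      set fA := RelKer.restr (RelKer.Bpred Γ u v) (Minv (RelKer.δ u)) with hfAdef
      set c : ℂ := g u / Minv (RelKer.δ u) u with hcdef
      have hh := hcomb g fA c hg hfA_inKer
      have hhu : (g - c • fA) u = 0 := by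
        rw [hsubeval, hfAu, hcdef, div_mul_cancel₀ _ hG', sub_self]
      have hd := hdec (g - c • fA) (fun x hx => hh.1 x hx) (fun x hx hxu => hh.2 x hx hxu)
      rw [hhu, zero_smul, add_zero] at hd
      have he : (g - c • fA) u = (M (g - c • fA) u) * Minv (RelKer.δ u) u := by
        conv_lhs => rw [hd]
        exact heval _ _ u
      rw [hhu] at he
      have hz : M (g - c • fA) u = 0 := by
        rcases mul_eq_zero.1 he.symm with h | h
        · exact h
        · exact absurd h hG'
      rw [hz, zero_smul] at hd
      exact sub_eq_zero.1 hd
  · -- case (ii)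
    intro hGuu hGuv
    have hGuu' : Minv (RelKer.δ u) u = 0 := hGuu
    have hGuv' : Minv (RelKer.δ u) v = 0 := hGuv
    have hfBw := hfBw_of hGuu'
    -- the coefficient is 1
    have hMfBu : M (RelKer.restr (fun x => ¬ RelKer.Bpred Γ u v x) (Minv (RelKer.δ u))) u
        = 1 := by
      have hcg : M (RelKer.restr (fun x => ¬ RelKer.Bpred Γ u v x) (Minv (RelKer.δ u))) u
          = M (Minv (RelKer.δ u)) u := by
        refine RelKer.apply_congr Γ M hloc _ _ u (fun y hy => ?_)
        by_cases hBy : RelKer.Bpred Γ u v y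
        · have hyuv : y = u ∨ y = v := by
            rcases Finset.mem_insert.1 hy with rfl | hy'
            · exact Or.inl rfl
            · rw [SimpleGraph.mem_neighborFinset] at hy'
              exact Or.inr ((branch_nbr_u Γ hT huv hy'.symm).1 hBy)
          rcases hyuv with rfl | rfl
          · rw [RelKer.restr_apply, if_neg (not_not_intro hBu), hGuu']
          · rw [RelKer.restr_apply, if_neg (not_not_intro hBv), hGuv']
        · rw [RelKer.restr_apply, if_pos hBy]
      rw [hcg, hMw0, if_pos rfl]
    have hfBeq : RelKer.restr (fun x => ¬ RelKer.Bpred Γ u v x) (Minv (RelKer.δ u))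
        = Minv (RelKer.δ u) := by
      rw [hfBw, hMfBu, one_smul]
    have hw0B : ∀ x, RelKer.Bpred Γ u v x → Minv (RelKer.δ u) x = 0 := by
      intro x hx
      have h1 : RelKer.restr (fun x => ¬ RelKer.Bpred Γ u v x) (Minv (RelKer.δ u)) x
          = 0 := by rw [RelKer.restr_apply, if_neg (not_not_intro hx)]
      rw [hfBeq] at h1
      exact h1
    -- the candidate: restriction of `Minv s` to the branch
    set t0 : lp (fun _ : T => ℂ) 2 :=
      Minv (∑ y ∈ RelKer.Sfin Γ u v, (M (RelKer.δ u) y) • RelKer.δ y) with ht0def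
    have hf_ker : ∀ x, RelKer.Bpred Γ u v x → x ≠ u →
        M (RelKer.restr (RelKer.Bpred Γ u v) t0) x = 0 := by
      intro x hx hxu
      have hcg : M (RelKer.restr (RelKer.Bpred Γ u v) t0) x = M t0 x := by
        refine RelKer.apply_congr Γ M hloc _ _ x (fun y hy => ?_)
        have hBy : RelKer.Bpred Γ u v y := by
          rcases Finset.mem_insert.1 hy with rfl | hy'
          · exact hx
          · rw [SimpleGraph.mem_neighborFinset] at hy'
            exact branch_closed Γ hT huv hx hxu hy'
        rw [RelKer.restr_apply, if_pos hBy]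
      have hMt0 : M t0 x = if x ∈ RelKer.Sfin Γ u v then M (RelKer.δ u) x else 0 := by
        rw [ht0def, hMr]
        exact RelKer.svec_apply Γ M u v x
      rw [hcg, hMt0, if_neg (fun hmem => by
        rw [RelKer.Sfin, Finset.mem_filter] at hmem
        exact hmem.2 hx)]
    -- the value at `u` is 1
    have hfu : RelKer.restr (RelKer.Bpred Γ u v) t0 u = 1 := by
      have h0 : RelKer.restr (RelKer.Bpred Γ u v) t0 u = t0 u := by
        rw [RelKer.restr_apply, if_pos hBu]
      have h1 : t0 = ∑ y ∈ RelKer.Sfin Γ u v, (M (RelKer.δ u) y) • Minv (RelKer.δ y) := by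
        rw [ht0def, map_sum]
        exact Finset.sum_congr rfl fun y _ => map_smul Minv _ _
      have h2 : t0 u = ∑ y ∈ RelKer.Sfin Γ u v,
          M (RelKer.δ u) y * Minv (RelKer.δ u) y := by
        rw [h1, lp.coeFn_sum, Finset.sum_apply]
        refine Finset.sum_congr rfl fun y _ => ?_
        rw [heval, RelKer.green_sym M Minv hMinv₂ hsym y u]
      have h3 : M (Minv (RelKer.δ u)) u
          = ∑ y ∈ insert u (Γ.neighborFinset u),
              Minv (RelKer.δ u) y * M (RelKer.δ y) u :=
        RelKer.apply_eq_sum Γ M hloc (Minv (RelKer.δ u)) u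
      have h4 : (1 : ℂ) = ∑ y ∈ insert u (Γ.neighborFinset u),
          Minv (RelKer.δ u) y * M (RelKer.δ y) u := by
        rw [← h3, hMw0, if_pos rfl]
      have h5 : ∑ y ∈ RelKer.Sfin Γ u v, Minv (RelKer.δ u) y * M (RelKer.δ y) u
          = ∑ y ∈ insert u (Γ.neighborFinset u),
              Minv (RelKer.δ u) y * M (RelKer.δ y) u := by
        refine Finset.sum_subset (fun y hy => ?_) (fun y hy hyn => ?_)
        · rw [RelKer.Sfin, Finset.mem_filter] at hy
          exact Finset.mem_insert.2 (Or.inr hy.1)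
        · by_cases hBy : RelKer.Bpred Γ u v y
          · rw [hw0B y hBy, zero_mul]
          · exfalso
            apply hyn
            rw [RelKer.Sfin, Finset.mem_filter]
            refine ⟨?_, hBy⟩
            rcases Finset.mem_insert.1 hy with rfl | hy'
            · exact absurd hBu hBy
            · exact hy'
      rw [h0, h2]
      rw [show (∑ y ∈ RelKer.Sfin Γ u v, M (RelKer.δ u) y * Minv (RelKer.δ u) y)
          = ∑ y ∈ RelKer.Sfin Γ u v, Minv (RelKer.δ u) y * M (RelKer.δ y) u from
        Finset.sum_congr rfl fun y _ => by rw [hsym u y, mul_comm]]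
      rw [h5, ← h4]
    have hf_inKer : inKer (RelKer.restr (RelKer.Bpred Γ u v) t0) :=
      ⟨fun x hx => by
        rw [RelKer.restr_apply, if_neg (show ¬ RelKer.Bpred Γ u v x from hx)],
       fun x hx hxu => hf_ker x hx hxu⟩
    refine ⟨RelKer.restr (RelKer.Bpred Γ u v) t0, ?_, hf_inKer, ?_⟩
    · intro h0
      have := hfu
      rw [h0] at this
      simp [lp.coeFn_zero] at this
    · intro g hg
      refine ⟨g u, ?_⟩
      set c : ℂ := g u with hcdef
      set f := RelKer.restr (RelKer.Bpred Γ u v) t0 with hfdef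
      have hh := hcomb g f c hg hf_inKer
      have hhu : (g - c • f) u = 0 := by
        rw [hsubeval, hfdef, hfu, mul_one, hcdef, sub_self]
      have hd := hdec (g - c • f) (fun x hx => hh.1 x hx) (fun x hx hxu => hh.2 x hx hxu)
      rw [hhu, zero_smul, add_zero] at hd
      have hzero : g - c • f = 0 := by
        refine lp.ext (funext fun x => ?_)
        have hx1 : (g - c • f) x = (M (g - c • f) u) * Minv (RelKer.δ u) x := by
          conv_lhs => rw [hd]
          exact heval _ _ x
        by_cases hBx : RelKer.Bpred Γ u v x
        · rw [hx1, hw0B x hBx, mul_zero]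
          simp [lp.coeFn_zero]
        · rw [hh.1 x hBx]
          simp [lp.coeFn_zero]
      exact sub_eq_zero.1 hzero
  · -- case (iii)
    intro hGuu hGuv
    have hGuu' : Minv (RelKer.δ u) u = 0 := hGuu
    have hGuv' : Minv (RelKer.δ u) v ≠ 0 := hGuv
    have hfB_zero := hfB_zero_of hGuu'
    have hfBw := hfBw_of hGuu'
    -- evaluating at v shows the complement part vanishes
    have hfBv : RelKer.restr (fun x => ¬ RelKer.Bpred Γ u v x) (Minv (RelKer.δ u)) v = 0 := by
      rw [RelKer.restr_apply, if_neg (not_not_intro hBv)]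
    have hcoef : M (RelKer.restr (fun x => ¬ RelKer.Bpred Γ u v x) (Minv (RelKer.δ u))) u = 0 := by
      have he : RelKer.restr (fun x => ¬ RelKer.Bpred Γ u v x) (Minv (RelKer.δ u)) v
          = M (RelKer.restr (fun x => ¬ RelKer.Bpred Γ u v x) (Minv (RelKer.δ u))) u
            * Minv (RelKer.δ u) v := by
        conv_lhs => rw [hfBw]
        exact heval _ _ v
      rw [hfBv] at he
      rcases mul_eq_zero.1 he.symm with h | h
      · exact h
      · exact absurd h hGuv'
    have hfB0 : RelKer.restr (fun x => ¬ RelKer.Bpred Γ u v x) (Minv (RelKer.δ u)) = 0 := by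
      rw [hfBw, hcoef, zero_smul]
    have hw0supp : ∀ x, ¬ RelKer.Bpred Γ u v x → Minv (RelKer.δ u) x = 0 := by
      intro x hx
      have h1 : RelKer.restr (fun x => ¬ RelKer.Bpred Γ u v x) (Minv (RelKer.δ u)) x
          = Minv (RelKer.δ u) x := by
        rw [RelKer.restr_apply, if_pos hx]
      rw [hfB0] at h1
      rw [← h1]
      simp [lp.coeFn_zero]
    refine ⟨Minv (RelKer.δ u), ?_, ⟨⟨fun x hx => hw0supp x hx, fun x hx hxu => by
      rw [hMw0, if_neg hxu]⟩, hGuu'⟩, ?_⟩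
    · intro h0
      apply hGuv'
      rw [h0]
      simp [lp.coeFn_zero]
    · intro g hg hgu
      refine ⟨M g u, ?_⟩
      have hd := hdec g (fun x hx => hg.1 x hx) (fun x hx hxu => hg.2 x hx hxu)
      have hgu' : g u = (0 : ℂ) := hgu
      rw [hgu', zero_smul, add_zero] at hd
      exact hd
end
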